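/- arXiv:1705.00836 — 8 statements merged into one kernel-verified Lean document; each statement's English description precedes it below -/
import Mathlib

section
/- Let A be an n×N real matrix (n ≥ 2) whose columns form a frame for ℝⁿ (i.e., A has rank n). Suppose that for all sign vectors s, s' ∈ S_N := {(s_1,...,s_N) : s_1 = 1, s_i = ±1} with s ≠ s', the column spaces D_s Aᵀ ℝⁿ and D_{s'} Aᵀ ℝⁿ are distinct (where D_s is the diagonal matrix with diagonal s). Then A is almost phase retrievable: there is a finite union E_0 of proper subspaces of ℝⁿ such that every x ∈ ℝⁿ \ E_0 is determined up to a global sign by the sequence of absolute frame coefficients (|⟨x, A_i⟩|)_{i=1}^N, where A_i are the columns of A. -/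
/-- almost phase retrievability from distinctness of signed column spaces. -/
theorem stmt_0 {n N : ℕ} (hn : 2 ≤ n) (A : Matrix (Fin n) (Fin (N + 1)) ℝ)
    (hrank : A.rank = n)
    (hdist : ∀ s s' : Fin (N + 1) → ℝ,
      (∀ i, s i = 1 ∨ s i = -1) → (∀ i, s' i = 1 ∨ s' i = -1) →
      s 0 = 1 → s' 0 = 1 → s ≠ s' →
      LinearMap.range (Matrix.mulVecLin (Matrix.diagonal s * A.transpose)) ≠
        LinearMap.range (Matrix.mulVecLin (Matrix.diagonal s' * A.transpose))) :
    ∃ S : Finset (Submodule ℝ (Fin n → ℝ)), (∀ W ∈ S, W ≠ ⊤) ∧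
      ∀ x : Fin n → ℝ, (∀ W ∈ S, x ∉ W) →
        ∀ y : Fin n → ℝ,
          (∀ i, |∑ j, x j * A j i| = |∑ j, y j * A j i|) → y = x ∨ y = -x := by
  classical
  have hsgn : ∀ s : Fin (N+1) → ℝ, (∀ i, s i = 1 ∨ s i = -1) →
      (Matrix.diagonal s * A.transpose).rank = n := by
    intro s hs
    rw [Matrix.rank_mul_eq_right_of_isUnit_det, Matrix.rank_transpose, hrank]
    rw [Matrix.det_diagonal, isUnit_iff_ne_zero, Finset.prod_ne_zero_iff]
    intro i _
    rcases hs i with h | h <;> rw [h] <;> norm_num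
  have hinj : Function.Injective (Matrix.mulVecLin A.transpose) := by
    rw [← LinearMap.ker_eq_bot]
    have h1 := (Matrix.mulVecLin A.transpose).finrank_range_add_finrank_ker
    rw [← Matrix.rank, Matrix.rank_transpose, hrank] at h1
    have hfr : Module.finrank ℝ (Fin n → ℝ) = n := by simp
    rw [hfr] at h1
    exact Submodule.finrank_eq_zero.mp (by omega)
  set sg : (Fin (N+1) → Bool) → (Fin (N+1) → ℝ) := fun b i =>
    if i = 0 then 1 else if b i then 1 else -1 with hsgdef
  have hsg : ∀ b i, sg b i = 1 ∨ sg b i = -1 := by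
    intro b i
    by_cases h : i = 0 <;> by_cases h2 : b i <;> simp [hsgdef, h, h2]
  have hsg0 : ∀ b, sg b 0 = 1 := by intro b; simp [hsgdef]
  set W : (Fin (N+1) → ℝ) → Submodule ℝ (Fin n → ℝ) := fun s =>
    Submodule.comap (Matrix.mulVecLin (Matrix.diagonal s * A.transpose))
      (LinearMap.range (Matrix.mulVecLin A.transpose)) with hWdef
  refine ⟨Finset.image (fun b => W (sg b))
      (Finset.univ.filter fun b => sg b ≠ fun _ => 1), ?_, ?_⟩
  · intro Wb hWb
    simp only [Finset.mem_image, Finset.mem_filter, Finset.mem_univ, true_and] at hWb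
    obtain ⟨b, hb1, rfl⟩ := hWb
    intro htop
    have hle : LinearMap.range (Matrix.mulVecLin (Matrix.diagonal (sg b) * A.transpose)) ≤
        LinearMap.range (Matrix.mulVecLin A.transpose) := by
      rintro _ ⟨x, rfl⟩
      have hx : x ∈ W (sg b) := htop ▸ Submodule.mem_top
      exact hx
    have heq : LinearMap.range (Matrix.mulVecLin (Matrix.diagonal (sg b) * A.transpose)) =
        LinearMap.range (Matrix.mulVecLin A.transpose) := by
      apply Submodule.eq_of_le_of_finrank_eq hle
      rw [← Matrix.rank, ← Matrix.rank, hsgn _ (hsg b), Matrix.rank_transpose, hrank]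
    apply hdist (sg b) (fun _ => 1) (hsg b) (fun i => Or.inl rfl) (hsg0 b) rfl hb1
    rw [heq]
    have h1 : Matrix.diagonal (fun _ : Fin (N+1) => (1:ℝ)) = 1 := Matrix.diagonal_one
    rw [h1, Matrix.one_mul]
  · intro x hx y hy
    have hy' : ∀ i, |A.transpose.mulVec x i| = |A.transpose.mulVec y i| := by
      intro i
      have : ∀ z : Fin n → ℝ, A.transpose.mulVec z i = ∑ j, z j * A j i := by
        intro z
        simp [Matrix.mulVec, Matrix.transpose_apply, dotProduct, mul_comm]
      rw [this, this]; exact hy i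
    have key : ∀ z : Fin n → ℝ, (∀ i, |A.transpose.mulVec x i| = |A.transpose.mulVec z i|) →
        A.transpose.mulVec z 0 = A.transpose.mulVec x 0 → z = x := by
      intro z habs h0
      set b : Fin (N+1) → Bool :=
        fun i => decide (A.transpose.mulVec z i = A.transpose.mulVec x i) with hbdef
      have hzs : ∀ i, A.transpose.mulVec z i = sg b i * A.transpose.mulVec x i := by
        intro i
        by_cases h : A.transpose.mulVec z i = A.transpose.mulVec x i
        · have hs1 : sg b i = 1 := by
            by_cases hi : i = 0 <;> simp [hsgdef, hbdef, hi, h]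
          rw [hs1, one_mul, h]
        · have hneg : A.transpose.mulVec z i = - A.transpose.mulVec x i := by
            rcases abs_eq_abs.mp (habs i).symm with h1 | h1
            · exact absurd h1 h
            · exact h1
          have hi : i ≠ 0 := by rintro rfl; exact h h0
          have hs1 : sg b i = -1 := by simp [hsgdef, hbdef, hi, h]
          rw [hs1, hneg, neg_one_mul]
      by_cases hall : sg b = fun _ => (1:ℝ)
      · apply hinj
        simp only [Matrix.mulVecLin_apply]
        funext i
        rw [hzs i, congrFun hall i, one_mul]
      · exfalso
        apply hx (W (sg b))
        · simp only [Finset.mem_image, Finset.mem_filter, Finset.mem_univ, true_and]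
          exact ⟨b, hall, rfl⟩
        · show Matrix.mulVecLin (Matrix.diagonal (sg b) * A.transpose) x ∈
            LinearMap.range (Matrix.mulVecLin A.transpose)
          refine ⟨z, ?_⟩
          simp only [Matrix.mulVecLin_apply]
          rw [← Matrix.mulVec_mulVec]
          funext i
          rw [Matrix.mulVec_diagonal, ← hzs i]
    by_cases h0 : A.transpose.mulVec y 0 = A.transpose.mulVec x 0
    · exact Or.inl (key y hy' h0)
    · right
      have hneg0 : A.transpose.mulVec y 0 = - A.transpose.mulVec x 0 := by
        rcases abs_eq_abs.mp (hy' 0).symm with h1 | h1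
        · exact absurd h1 h0
        · exact h1
      have habs : ∀ i, |A.transpose.mulVec x i| = |A.transpose.mulVec (-y) i| := by
        intro i
        rw [Matrix.mulVec_neg]
        simpa [abs_neg] using hy' i
      have h0' : A.transpose.mulVec (-y) 0 = A.transpose.mulVec x 0 := by
        rw [Matrix.mulVec_neg]
        simp [hneg0]
      have := key (-y) habs h0'
      rw [← this]
      simp
end

section
/- Let A be an n×N real matrix of rank n whose columns form a frame for ℝⁿ, n ≥ 2. If A is almost phase retrievable, then A is weak full spark: removing any single column of A leaves a matrix of rank n. -/
open Matrix


/-- an almost phase retrievable frame matrix is weak full spark. -/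
theorem stmt_3 {n N : ℕ} (hn : 2 ≤ n) (A : Matrix (Fin n) (Fin N) ℝ)
    (hrank : A.rank = n)
    (hAPR : ∃ S : Finset (Submodule ℝ (Fin n → ℝ)), (∀ W ∈ S, W ≠ ⊤) ∧
      ∀ x : Fin n → ℝ, (∀ W ∈ S, x ∉ W) →
        ∀ y : Fin n → ℝ,
          (∀ i, |∑ j, x j * A j i| = |∑ j, y j * A j i|) → y = x ∨ y = -x) :
    ∀ i : Fin N,
      (A.submatrix id (fun j : {j : Fin N // j ≠ i} => (j : Fin N))).rank = n := by
  intro i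
  classical
  set B : Matrix (Fin n) {j : Fin N // j ≠ i} ℝ :=
    A.submatrix id (fun j : {j : Fin N // j ≠ i} => (j : Fin N)) with hB
  by_contra hne
  -- ker of Aᵀ is trivial
  have hAfin : Matrix.rank Aᵀ = n := by rw [Matrix.rank_transpose]; exact hrank
  have hAker : LinearMap.ker (Aᵀ.mulVecLin) = ⊥ := by
    have h1 := LinearMap.finrank_range_add_finrank_ker (Aᵀ.mulVecLin)
    have h2 : Module.finrank ℝ (LinearMap.range Aᵀ.mulVecLin) = n := hAfin
    rw [h2] at h1
    have h3 : Module.finrank ℝ (Fin n → ℝ) = n := by simp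
    rw [h3] at h1
    have : Module.finrank ℝ (LinearMap.ker Aᵀ.mulVecLin) = 0 := by omega
    exact Submodule.finrank_eq_zero.mp this
  -- ker of Bᵀ is nontrivial
  have hBle : B.rank ≤ n := le_trans B.rank_le_card_height (by simp)
  have hBlt : B.rank < n := lt_of_le_of_ne hBle hne
  have hBker : LinearMap.ker (Bᵀ.mulVecLin) ≠ ⊥ := by
    have h1 := LinearMap.finrank_range_add_finrank_ker (Bᵀ.mulVecLin)
    have h2 : Module.finrank ℝ (LinearMap.range Bᵀ.mulVecLin) = Bᵀ.rank := rfl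
    rw [h2, Matrix.rank_transpose] at h1
    have h3 : Module.finrank ℝ (Fin n → ℝ) = n := by simp
    rw [h3] at h1
    intro hb
    rw [hb] at h1
    simp only [finrank_bot] at h1
    omega
  obtain ⟨u, huker, hu0⟩ := Submodule.ne_bot_iff _ |>.mp hBker
  rw [LinearMap.mem_ker] at huker
  -- u kills every column except i
  have hucol : ∀ j : Fin N, j ≠ i → ∑ k, u k * A k j = 0 := by
    intro j hj
    have := congrFun huker ⟨j, hj⟩
    simpa [Matrix.mulVecLin, Matrix.mulVec, dotProduct, hB, mul_comm] using this
  -- u does not kill column i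
  have hc : ∑ k, u k * A k i ≠ 0 := by
    intro hc0
    have : Aᵀ.mulVecLin u = 0 := by
      funext j
      by_cases hj : j = i
      · subst hj
        simpa [Matrix.mulVecLin, Matrix.mulVec, Matrix.vecMul, dotProduct, mul_comm] using hc0
      · simpa [Matrix.mulVecLin, Matrix.mulVec, Matrix.vecMul, dotProduct, mul_comm] using hucol j hj
    have : u ∈ LinearMap.ker Aᵀ.mulVecLin := this
    rw [hAker] at this
    exact hu0 this
  set c : ℝ := ∑ k, u k * A k i with hcdef
  obtain ⟨S, hS, hSmain⟩ := hAPR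
  -- the hyperplane ⟨·, A_i⟩ = 0
  let φ : (Fin n → ℝ) →ₗ[ℝ] ℝ := (LinearMap.proj i).comp Aᵀ.mulVecLin
  have hφ : ∀ z : Fin n → ℝ, φ z = ∑ k, z k * A k i := by
    intro z
    simp [φ, Matrix.mulVecLin, Matrix.mulVec, Matrix.vecMul, dotProduct, mul_comm]
  let W1 : Submodule ℝ (Fin n → ℝ) := LinearMap.ker φ
  let W2 : Submodule ℝ (Fin n → ℝ) := Submodule.span ℝ {u}
  have hW1 : W1 ≠ ⊤ := by
    intro h
    have : u ∈ W1 := h ▸ Submodule.mem_top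
    rw [LinearMap.mem_ker, hφ] at this
    exact hc this
  have hW2 : W2 ≠ ⊤ := by
    intro h
    have h1 : Module.finrank ℝ W2 = 1 := finrank_span_singleton hu0
    rw [h] at h1
    have h2 : Module.finrank ℝ (⊤ : Submodule ℝ (Fin n → ℝ)) = n := by simp
    omega
  set S' : Finset (Submodule ℝ (Fin n → ℝ)) := insert W1 (insert W2 S) with hS'
  have htop : ⊤ ∉ S' := by
    simp only [hS', Finset.mem_insert]
    push_neg
    exact ⟨Ne.symm hW1, Ne.symm hW2, fun h => (hS ⊤ h) rfl⟩
  have hcov := Subspace.biUnion_ne_univ_of_top_notMem htop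
  rw [Set.ne_univ_iff_exists_notMem] at hcov
  obtain ⟨x, hx⟩ := hcov
  rw [Set.mem_iUnion₂] at hx
  push_neg at hx
  have hxS : ∀ W ∈ S, x ∉ W := fun W hW => hx W (by simp [hS', hW])
  have hxW1 : x ∉ W1 := hx W1 (by simp [hS'])
  have hxW2 : x ∉ W2 := hx W2 (by simp [hS'])
  have hσ : ∑ k, x k * A k i ≠ 0 := by
    intro h0
    exact hxW1 (by rw [LinearMap.mem_ker, hφ]; exact h0)
  set σ : ℝ := ∑ k, x k * A k i with hσdef
  set t : ℝ := 2 * σ / c with htdef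
  set y : Fin n → ℝ := x - t • u with hy
  have hmag : ∀ i' : Fin N, |∑ j, x j * A j i'| = |∑ j, y j * A j i'| := by
    intro i'
    have hexp : ∑ j, y j * A j i' = (∑ j, x j * A j i') - t * ∑ j, u j * A j i' := by
      simp [hy, sub_mul, Finset.sum_sub_distrib, Finset.mul_sum, mul_assoc]
    by_cases hi' : i' = i
    · subst hi'
      rw [hexp]
      have : t * c = 2 * σ := by
        rw [htdef]; field_simp
      rw [← hcdef, this, ← hσdef]
      rw [show σ - 2 * σ = -σ by ring, abs_neg]
    · rw [hexp, hucol i' hi']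
      ring_nf
  rcases hSmain x hxS y hmag with h | h
  · -- y = x forces t = 0, i.e. σ = 0
    have : t • u = 0 := by
      have := h
      rw [hy] at this
      simpa [sub_eq_self] using this
    rcases smul_eq_zero.mp this with ht | hu
    · rw [htdef] at ht
      have : σ = 0 := by
        rcases div_eq_zero_iff.mp ht with h | h
        · linarith
        · exact absurd h hc
      exact hσ this
    · exact hu0 hu
  · -- y = -x forces x ∈ span {u}
    have hxx : t • u = x + x := by
      have := h
      rw [hy] at this
      have h2 : x - t • u = -x := this
      have := congrArg (fun z => z + x + t • u) h2
      simpa [add_comm, add_assoc, add_left_comm, sub_add_cancel] using this.symm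
    have : x = (t / 2) • u := by
      funext k
      have hk := congrFun hxx k
      simp only [Pi.add_apply, Pi.smul_apply, smul_eq_mul] at hk ⊢
      linarith
    exact hxW2 (Submodule.mem_span_singleton.mpr ⟨t / 2, this.symm⟩)
end

section
/- Let A be an n×(n+1) real matrix of rank n, n ≥ 2. If A is weak full spark (deleting any single column leaves rank n), then A is almost phase retrievable: all vectors x ∈ ℝⁿ outside a finite union of proper subspaces are determined up to a sign by the magnitudes |⟨x, A_i⟩| over the columns A_i of A. -/
open Matrix

variable {n : ℕ}

/-- the subspace of vectors orthogonal to the columns of `A` indexed by `S`. -/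
noncomputable def kerV (A : Matrix (Fin n) (Fin (n + 1)) ℝ) (S : Finset (Fin (n + 1))) :
    Submodule ℝ (Fin n → ℝ) :=
  LinearMap.ker (Matrix.mulVecLin (Aᵀ.submatrix (fun i : S => (i : Fin (n + 1))) id))

lemma mem_kerV {A : Matrix (Fin n) (Fin (n + 1)) ℝ} {S : Finset (Fin (n + 1))}
    {x : Fin n → ℝ} : x ∈ kerV A S ↔ ∀ i ∈ S, ∑ j, x j * A j i = 0 := by
  simp only [kerV, LinearMap.mem_ker, Matrix.mulVecLin_apply, funext_iff, Pi.zero_apply,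
    Matrix.mulVec, dotProduct, Matrix.submatrix_apply, Matrix.transpose_apply, id]
  constructor
  · intro h i hi
    have := h ⟨i, hi⟩
    simpa [mul_comm] using this
  · intro h i
    simpa [mul_comm] using h i i.2

lemma kerV_anti {A : Matrix (Fin n) (Fin (n + 1)) ℝ} {S T : Finset (Fin (n + 1))}
    (h : S ⊆ T) : kerV A T ≤ kerV A S := by
  intro x hx
  rw [mem_kerV] at hx ⊢
  exact fun i hi => hx i (h hi)

lemma finrank_kerV {A : Matrix (Fin n) (Fin (n + 1)) ℝ} {S : Finset (Fin (n + 1))}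
    (hli : LinearIndependent ℝ (fun i : S => Aᵀ (i : Fin (n + 1)))) :
    Module.finrank ℝ (kerV A S) = n - S.card := by
  classical
  set B : Matrix S (Fin n) ℝ := Aᵀ.submatrix (fun i : S => (i : Fin (n + 1))) id with hB
  have hrn := LinearMap.finrank_range_add_finrank_ker (Matrix.mulVecLin B)
  have hdom : Module.finrank ℝ (Fin n → ℝ) = n := Module.finrank_fin_fun ℝ
  have hrange : Module.finrank ℝ (LinearMap.range (Matrix.mulVecLin B)) = B.rank := rfl
  have hBrank : B.rank = S.card := by
    rw [← Matrix.rank_transpose B, Matrix.rank_eq_finrank_span_cols]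
    have : Bᵀᵀ = B := Matrix.transpose_transpose _
    rw [show Bᵀ.col = B from this]
    have hr : Set.range B = Set.range (fun i : S => Aᵀ (i : Fin (n + 1))) := by
      congr 1
    rw [hr]
    have := (linearIndependent_iff_card_eq_finrank_span.mp hli).symm
    rw [Set.finrank] at this
    rw [this, Fintype.card_coe]
  have hk : kerV A S = LinearMap.ker (Matrix.mulVecLin B) := rfl
  rw [hk]
  omega

lemma li_of_wfs {A : Matrix (Fin n) (Fin (n + 1)) ℝ}
    (hWFS : ∀ i : Fin (n + 1),
      (A.submatrix id (fun j : {j : Fin (n + 1) // j ≠ i} => (j : Fin (n + 1)))).rank = n)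
    {S : Finset (Fin (n + 1))} (hS : S.card ≤ n) :
    LinearIndependent ℝ (fun i : S => Aᵀ (i : Fin (n + 1))) := by
  classical
  obtain ⟨i, hi⟩ : ∃ i : Fin (n + 1), i ∉ S := by
    by_contra h
    push_neg at h
    have h1 : (Finset.univ : Finset (Fin (n + 1))) ⊆ S := fun x _ => h x
    have := Finset.card_le_card h1
    simp [Finset.card_univ] at this
    omega
  have hcard : Fintype.card {j : Fin (n + 1) // j ≠ i} = n := by
    simp [Fintype.card_subtype_compl]
  have hli : LinearIndependent ℝ (fun j : {j : Fin (n + 1) // j ≠ i} => Aᵀ (j : Fin (n + 1))) := by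
    rw [linearIndependent_iff_card_eq_finrank_span, hcard]
    have h1 := Matrix.rank_eq_finrank_span_cols
      (A.submatrix id (fun j : {j : Fin (n + 1) // j ≠ i} => (j : Fin (n + 1))))
    rw [hWFS i] at h1
    have h2 : (A.submatrix id (fun j : {j : Fin (n + 1) // j ≠ i} =>
        (j : Fin (n + 1))))ᵀ = fun j : {j : Fin (n + 1) // j ≠ i} =>
        Aᵀ (j : Fin (n + 1)) := by
      funext j r
      simp [Matrix.transpose_apply, Matrix.submatrix_apply]
    rw [show Matrix.col (A.submatrix id (fun j : {j : Fin (n + 1) // j ≠ i} =>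
        (j : Fin (n + 1)))) = fun j : {j : Fin (n + 1) // j ≠ i} =>
        Aᵀ (j : Fin (n + 1)) from h2] at h1
    exact h1
  let e : S → {j : Fin (n + 1) // j ≠ i} := fun j => ⟨(j : Fin (n + 1)),
      fun h => hi (h ▸ j.2)⟩
  have einj : Function.Injective e := by
    intro a b hab
    simp only [e, Subtype.mk.injEq] at hab
    exact Subtype.ext hab
  exact hli.comp e einj

/-- a weak full spark n×(n+1) matrix of rank n is almost phase retrievable. -/
theorem stmt_4 {n : ℕ} (hn : 2 ≤ n) (A : Matrix (Fin n) (Fin (n + 1)) ℝ)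
    (hrank : A.rank = n)
    (hWFS : ∀ i : Fin (n + 1),
      (A.submatrix id (fun j : {j : Fin (n + 1) // j ≠ i} => (j : Fin (n + 1)))).rank = n) :
    ∃ S : Finset (Submodule ℝ (Fin n → ℝ)), (∀ W ∈ S, W ≠ ⊤) ∧
      ∀ x : Fin n → ℝ, (∀ W ∈ S, x ∉ W) →
        ∀ y : Fin n → ℝ,
          (∀ i, |∑ j, x j * A j i| = |∑ j, y j * A j i|) → y = x ∨ y = -x := by
  classical
  refine ⟨(Finset.univ.filter (fun p : Finset (Fin (n + 1)) × Finset (Fin (n + 1)) =>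
      p.1.card ≤ n - 1 ∧ p.2.card ≤ n - 1 ∧ p.1 ∪ p.2 = Finset.univ)).image
      (fun p => kerV A p.1 ⊔ kerV A p.2), ?_, ?_⟩
  · intro W hW
    simp only [Finset.mem_image, Finset.mem_filter, Finset.mem_univ, true_and] at hW
    obtain ⟨p, ⟨h1, h2, h3⟩, rfl⟩ := hW
    intro htop
    have hcards : n + 1 ≤ p.1.card + p.2.card := by
      have h4 := Finset.card_union_le p.1 p.2
      rw [h3, Finset.card_univ, Fintype.card_fin] at h4
      omega
    have f1 := finrank_kerV (li_of_wfs hWFS (show p.1.card ≤ n by omega))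
    have f2 := finrank_kerV (li_of_wfs hWFS (show p.2.card ≤ n by omega))
    have hsup := Submodule.finrank_add_le_finrank_add_finrank (kerV A p.1) (kerV A p.2)
    rw [htop, finrank_top, Module.finrank_fin_fun ℝ, f1, f2] at hsup
    omega
  · intro x hx y hy
    set Sm := Finset.univ.filter (fun i => ∑ j, (x - y) j * A j i = 0) with hSm
    set Sp := Finset.univ.filter (fun i => ∑ j, (x + y) j * A j i = 0) with hSp
    have hunion : Sm ∪ Sp = Finset.univ := by
      ext i
      simp only [Finset.mem_union, hSm, hSp, Finset.mem_filter, Finset.mem_univ, true_and,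
        iff_true]
      rcases abs_eq_abs.mp (hy i) with h | h
      · left
        simp only [Pi.sub_apply, sub_mul, Finset.sum_sub_distrib, h, sub_self]
      · right
        simp only [Pi.add_apply, add_mul, Finset.sum_add_distrib, h]
        ring
    have hxm : x - y ∈ kerV A Sm :=
      mem_kerV.mpr (fun i hi => (Finset.mem_filter.mp hi).2)
    have hxp : x + y ∈ kerV A Sp :=
      mem_kerV.mpr (fun i hi => (Finset.mem_filter.mp hi).2)
    by_cases h1 : n ≤ Sm.card
    · obtain ⟨T, hT, hTc⟩ := Finset.exists_subset_card_eq h1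
      have hbot : kerV A T = ⊥ := by
        rw [← Submodule.finrank_eq_zero (R := ℝ)]
        rw [finrank_kerV (li_of_wfs hWFS (le_of_eq hTc))]
        omega
      have h0 : x - y ∈ (⊥ : Submodule ℝ (Fin n → ℝ)) := hbot ▸ kerV_anti hT hxm
      rw [Submodule.mem_bot] at h0
      left
      exact (sub_eq_zero.mp h0).symm
    · by_cases h2 : n ≤ Sp.card
      · obtain ⟨T, hT, hTc⟩ := Finset.exists_subset_card_eq h2
        have hbot : kerV A T = ⊥ := by
          rw [← Submodule.finrank_eq_zero (R := ℝ)]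
          rw [finrank_kerV (li_of_wfs hWFS (le_of_eq hTc))]
          omega
        have h0 : x + y ∈ (⊥ : Submodule ℝ (Fin n → ℝ)) := hbot ▸ kerV_anti hT hxp
        rw [Submodule.mem_bot] at h0
        right
        exact eq_neg_of_add_eq_zero_right h0
      · exfalso
        have hcard1 : Sm.card ≤ n - 1 := by omega
        have hcard2 : Sp.card ≤ n - 1 := by omega
        have hmem : kerV A Sm ⊔ kerV A Sp ∈
            (Finset.univ.filter (fun p : Finset (Fin (n + 1)) × Finset (Fin (n + 1)) =>
              p.1.card ≤ n - 1 ∧ p.2.card ≤ n - 1 ∧ p.1 ∪ p.2 = Finset.univ)).image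
              (fun p => kerV A p.1 ⊔ kerV A p.2) :=
          Finset.mem_image.mpr ⟨(Sm, Sp), Finset.mem_filter.mpr
            ⟨Finset.mem_univ _, hcard1, hcard2, hunion⟩, rfl⟩
        apply hx _ hmem
        have hxe : x = (1 / 2 : ℝ) • ((x - y) + (x + y)) := by
          funext j
          simp only [Pi.smul_apply, Pi.add_apply, Pi.sub_apply, smul_eq_mul]
          ring
        rw [hxe]
        exact Submodule.smul_mem _ _ (Submodule.add_mem _
          (Submodule.mem_sup_left hxm) (Submodule.mem_sup_right hxp))
end

section
/- Let A be an n×(n+1) real matrix of rank n, n ≥ 2, which is weak full spark. If s, s' ∈ {±1}^{n+1} satisfy N(A D_s) = N(A D_{s'}), then s = s' or s = -s'. (Here the one-dimensional null space of A D_s equals {t·D_s a : t ∈ ℝ} for a fixed vector a with all entries nonzero satisfying A a = 0.) -/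
/-- for a weak full spark n×(n+1) matrix of rank n, equal null spaces of
`A Dₛ` and `A Dₛ'` force `s = s'` or `s = -s'`. -/
theorem stmt_5 {n : ℕ} (hn : 2 ≤ n) (A : Matrix (Fin n) (Fin (n + 1)) ℝ)
    (hrank : A.rank = n)
    (hWFS : ∀ i : Fin (n + 1),
      (A.submatrix id (fun j : {j : Fin (n + 1) // j ≠ i} => (j : Fin (n + 1)))).rank = n)
    (s s' : Fin (n + 1) → ℝ)
    (hs : ∀ i, s i = 1 ∨ s i = -1) (hs' : ∀ i, s' i = 1 ∨ s' i = -1)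
    (hker : LinearMap.ker (Matrix.mulVecLin (A * Matrix.diagonal s)) =
      LinearMap.ker (Matrix.mulVecLin (A * Matrix.diagonal s'))) :
    s = s' ∨ s = -s' := by
  have hfin : Module.finrank ℝ (LinearMap.ker A.mulVecLin) = 1 := by
    have h2 := LinearMap.finrank_range_add_finrank_ker A.mulVecLin
    rw [Matrix.rank] at hrank
    rw [hrank, Module.finrank_pi] at h2
    simp at h2
    omega
  -- get a nonzero element a of K
  have hKne : LinearMap.ker A.mulVecLin ≠ (⊥ : Submodule ℝ (Fin (n+1) → ℝ)) := by
    intro h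
    rw [h] at hfin
    simp at hfin
  obtain ⟨a, haK, hane⟩ := Submodule.exists_mem_ne_zero_of_ne_bot hKne
  have haK' : A.mulVec a = 0 := haK
  -- all entries of a are nonzero
  have hanz : ∀ i, a i ≠ 0 := by
    intro i hai
    have hsub := hWFS i
    set B := A.submatrix id (fun j : {j : Fin (n + 1) // j ≠ i} => (j : Fin (n + 1))) with hB
    have hker0 : LinearMap.ker B.mulVecLin = ⊥ := by
      have h1 := LinearMap.finrank_range_add_finrank_ker B.mulVecLin
      rw [Matrix.rank] at hsub
      have hcard : Fintype.card {j : Fin (n+1) // j ≠ i} = n := by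
        simp [Fintype.card_subtype_compl]
      rw [hsub, Module.finrank_pi, hcard] at h1
      rw [← Submodule.finrank_eq_zero]
      omega
    have hmem : (fun j : {j : Fin (n+1) // j ≠ i} => a (j : Fin (n+1))) ∈ LinearMap.ker B.mulVecLin := by
      ext k
      have : B.mulVec (fun j : {j : Fin (n+1) // j ≠ i} => a (j : Fin (n+1))) k = A.mulVec a k := by
        simp only [Matrix.mulVec, dotProduct, hB, Matrix.submatrix_apply, id]
        rw [Fintype.sum_eq_add_sum_compl i (fun x => A k x * a x), hai, mul_zero, zero_add]
        exact (Finset.sum_subtype (p := fun j => j ≠ i) ({i}ᶜ : Finset (Fin (n+1))) (fun x => by simp) (fun x => A k x * a x)).symm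
      simp [Matrix.mulVecLin_apply, this, haK']
    rw [hker0] at hmem
    have : a ≠ 0 := hane
    apply this
    ext j
    by_cases hj : j = i
    · simp [hj, hai]
    · have := congrFun hmem ⟨j, hj⟩
      simpa using this
  -- b in K
  have hsq : ∀ i, s i * s i = 1 := by
    intro i; rcases hs i with h | h <;> simp [h]
  have hcmem : (fun i => s i * a i) ∈ LinearMap.ker (A * Matrix.diagonal s).mulVecLin := by
    simp only [LinearMap.mem_ker, Matrix.mulVecLin_apply, ← Matrix.mulVec_mulVec]
    have : (Matrix.diagonal s).mulVec (fun i => s i * a i) = a := by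
      ext i
      simp [Matrix.mulVec_diagonal, ← mul_assoc, hsq]
    rw [this, haK']
  rw [hker] at hcmem
  have hbmem : (fun i => s' i * (s i * a i)) ∈ LinearMap.ker A.mulVecLin := by
    simp only [LinearMap.mem_ker, Matrix.mulVecLin_apply, ← Matrix.mulVec_mulVec] at hcmem
    have : (Matrix.diagonal s').mulVec (fun i => s i * a i)
        = fun i => s' i * (s i * a i) := by
      ext i; simp [Matrix.mulVec_diagonal]
    rw [this] at hcmem
    exact hcmem
  -- finrank 1: b = t • a
  obtain ⟨t, ht⟩ := (finrank_eq_one_iff_of_nonzero' (⟨a, haK⟩ : LinearMap.ker A.mulVecLin) (by simpa using hane)).mp hfin ⟨_, hbmem⟩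
  have ht' : ∀ i, s' i * s i * a i = t * a i := by
    intro i
    have := congrArg (fun v : LinearMap.ker A.mulVecLin => (v : Fin (n+1) → ℝ) i) ht
    simpa [mul_assoc] using this.symm
  have hts : ∀ i, s' i * s i = t := by
    intro i
    exact mul_right_cancel₀ (hanz i) (ht' i)
  have h0 := hts 0
  rcases hs 0 with h1 | h1 <;> rcases hs' 0 with h2 | h2
  all_goals (
    first
    | (left; ext i; have := hts i; rw [← h0] at this
       rcases hs i with h3 | h3 <;> rcases hs' i with h4 | h4 <;>
         simp [h1, h2, h3, h4] at this ⊢ <;> linarith)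
    | (right; ext i; have := hts i; rw [← h0] at this
       rcases hs i with h3 | h3 <;> rcases hs' i with h4 | h4 <;>
         simp [h1, h2, h3, h4] at this ⊢ <;> linarith))
end

section
/- Let m ≥ 1 and let φ_m be the B-spline of degree m (the (m+1)-fold convolution of the indicator of [0,1]). A function f = Σ_{n=N_1-m}^{N_2-1} c_n φ_m(·−n), restricted to [N_1, N_2], is separable (i.e., f = f_1 + f_2 with f_1, f_2 nonzero elements of the restricted spline space and f_1·f_2 ≡ 0 on [N_1,N_2]) if and only if N_2 − N_1 ≥ 2 and there exist indices n_1 < n_2 with n_2 − n_1 ≥ m + 1 such that c_{n_1} ≠ 0, c_{n_2} ≠ 0, and c_n = 0 for all n_1 < n < n_2. -/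
open MeasureTheory

/-- The degree-`m` B-spline: `(m+1)`-fold convolution of the indicator of `[0,1]`. -/
noncomputable def bspline : ℕ → ℝ → ℝ
  | 0 => Set.indicator (Set.Icc (0 : ℝ) 1) (fun _ => 1)
  | m + 1 => fun x => ∫ t in (0 : ℝ)..1, bspline m (x - t)

open intervalIntegral Set

lemma bspline_zero_apply (x : ℝ) :
    bspline 0 x = Set.indicator (Set.Icc (0 : ℝ) 1) (fun _ => 1) x := rfl

lemma bspline_succ_apply (m : ℕ) (x : ℝ) :
    bspline (m + 1) x = ∫ t in (0 : ℝ)..1, bspline m (x - t) := rfl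

lemma bspline_eq_zero_of_lt : ∀ (m : ℕ) {x : ℝ}, x < 0 → bspline m x = 0 := by
  intro m
  induction m with
  | zero =>
    intro x hx
    simp only [bspline_zero_apply]
    apply Set.indicator_of_notMem
    simp only [Set.mem_Icc]; intro h; linarith [h.1]
  | succ m ih =>
    intro x hx
    rw [bspline_succ_apply]
    calc (∫ t in (0:ℝ)..1, bspline m (x - t)) = ∫ t in (0:ℝ)..1, (0:ℝ) := by
          apply intervalIntegral.integral_congr
          intro t ht
          rw [Set.uIcc_of_le (by norm_num : (0:ℝ) ≤ 1)] at ht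
          exact ih (by linarith [ht.1])
      _ = 0 := by simp

lemma bspline_eq_zero_of_gt : ∀ (m : ℕ) {x : ℝ}, (m : ℝ) + 1 < x → bspline m x = 0 := by
  intro m
  induction m with
  | zero =>
    intro x hx
    apply Set.indicator_of_notMem
    simp only [Set.mem_Icc]; intro h; push_cast at hx; linarith [h.2]
  | succ m ih =>
    intro x hx
    rw [bspline_succ_apply]
    calc (∫ t in (0:ℝ)..1, bspline m (x - t)) = ∫ t in (0:ℝ)..1, (0:ℝ) := by
          apply intervalIntegral.integral_congr
          intro t ht
          rw [Set.uIcc_of_le (by norm_num : (0:ℝ) ≤ 1)] at ht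
          apply ih
          push_cast at hx ⊢
          linarith [ht.2]
      _ = 0 := by simp

lemma bspline_nonneg : ∀ (m : ℕ) (x : ℝ), 0 ≤ bspline m x := by
  intro m
  induction m with
  | zero => intro x; exact Set.indicator_nonneg (by intro a _; norm_num) x
  | succ m ih =>
    intro x
    rw [bspline_succ_apply]
    apply intervalIntegral.integral_nonneg (by norm_num)
    intro u _; exact ih _

lemma bspline_le_one : ∀ (m : ℕ) (x : ℝ), bspline m x ≤ 1 := by
  intro m
  induction m with
  | zero =>
    intro x
    rw [bspline_zero_apply, Set.indicator_apply]
    split <;> norm_num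
  | succ m ih =>
    intro x
    rw [bspline_succ_apply]
    have hb : ∀ t ∈ Set.uIoc (0:ℝ) 1, ‖bspline m (x - t)‖ ≤ 1 := by
      intro t _
      rw [Real.norm_eq_abs, abs_of_nonneg (bspline_nonneg _ _)]
      exact ih _
    have := intervalIntegral.norm_integral_le_of_norm_le_const hb
    calc (∫ t in (0:ℝ)..1, bspline m (x - t)) ≤ |∫ t in (0:ℝ)..1, bspline m (x - t)| := le_abs_self _
      _ ≤ 1 * |1 - 0| := this
      _ = 1 := by norm_num

lemma measurable_bspline : ∀ m : ℕ, Measurable (bspline m) := by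
  intro m
  induction m with
  | zero => exact (measurable_const.indicator measurableSet_Icc)
  | succ m ih =>
    have hint : ∀ a b : ℝ, IntervalIntegrable (bspline m) volume a b := by
      intro a b
      rw [intervalIntegrable_iff]
      apply Measure.integrableOn_of_bounded (M := 1)
      · exact (measure_Ioc_lt_top).ne
      · exact ih.aestronglyMeasurable
      · filter_upwards with t
        rw [Real.norm_eq_abs, abs_of_nonneg (bspline_nonneg _ _)]
        exact bspline_le_one _ _
    have heq : bspline (m+1) = fun x => (∫ s in (0:ℝ)..x, bspline m s)
        - ∫ s in (0:ℝ)..(x-1), bspline m s := by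
      funext x
      rw [bspline_succ_apply, intervalIntegral.integral_comp_sub_left (bspline m) x, sub_zero,
        intervalIntegral.integral_interval_sub_left (hint 0 x) (hint 0 (x-1))]
    have hcont : Continuous (bspline (m+1)) := by
      rw [heq]
      exact (intervalIntegral.continuous_primitive hint 0).sub
        ((intervalIntegral.continuous_primitive hint 0).comp (continuous_id.sub continuous_const))
    exact hcont.measurable

lemma intervalIntegrable_bspline (m : ℕ) (a b : ℝ) :
    IntervalIntegrable (bspline m) volume a b := by
  rw [intervalIntegrable_iff]
  apply Measure.integrableOn_of_bounded (M := 1)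
  · exact (measure_Ioc_lt_top).ne
  · exact (measurable_bspline m).aestronglyMeasurable
  · filter_upwards with t
    rw [Real.norm_eq_abs, abs_of_nonneg (bspline_nonneg _ _)]
    exact bspline_le_one _ _

lemma bspline_succ_eq (m : ℕ) (x : ℝ) :
    bspline (m + 1) x = (∫ s in (0:ℝ)..x, bspline m s) - ∫ s in (0:ℝ)..(x-1), bspline m s := by
  rw [bspline_succ_apply, intervalIntegral.integral_comp_sub_left (bspline m) x, sub_zero,
    intervalIntegral.integral_interval_sub_left (intervalIntegrable_bspline m 0 x)
      (intervalIntegrable_bspline m 0 (x-1))]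

lemma continuous_bspline_succ (m : ℕ) : Continuous (bspline (m + 1)) := by
  have heq : bspline (m+1) = fun x => (∫ s in (0:ℝ)..x, bspline m s)
      - ∫ s in (0:ℝ)..(x-1), bspline m s := funext (bspline_succ_eq m)
  rw [heq]
  exact (intervalIntegral.continuous_primitive (intervalIntegrable_bspline m) 0).sub
    ((intervalIntegral.continuous_primitive (intervalIntegrable_bspline m) 0).comp
      (continuous_id.sub continuous_const))

lemma continuousAt_bspline_nonint (m : ℕ) {x : ℝ} (hx : ∀ z : ℤ, x ≠ (z : ℝ)) :
    ContinuousAt (bspline m) x := by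
  cases m with
  | succ m => exact (continuous_bspline_succ m).continuousAt
  | zero =>
    have h0 : x ≠ 0 := by simpa using hx 0
    have h1 : x ≠ 1 := by simpa using hx 1
    rcases lt_trichotomy x 0 with h | h | h
    · apply ContinuousAt.congr (continuousAt_const (y := (0:ℝ)))
      filter_upwards [Iio_mem_nhds h] with y hy
      exact (bspline_eq_zero_of_lt 0 hy).symm
    · exact absurd h h0
    rcases lt_trichotomy x 1 with h1' | h1' | h1'
    · apply ContinuousAt.congr (continuousAt_const (y := (1:ℝ)))
      filter_upwards [Ioo_mem_nhds h h1'] with y hy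
      rw [bspline_zero_apply, Set.indicator_of_mem (Set.mem_Icc.2 ⟨hy.1.le, hy.2.le⟩)]
    · exact absurd h1' h1
    · apply ContinuousAt.congr (continuousAt_const (y := (0:ℝ)))
      filter_upwards [Ioi_mem_nhds h1'] with y hy
      have hy' := Set.mem_Ioi.mp hy
      exact (bspline_eq_zero_of_gt 0 (by push_cast; linarith)).symm

lemma integral01_eq_zero {f : ℝ → ℝ} (h : ∀ t ∈ Set.Ioo (0:ℝ) 1, f t = 0) :
    (∫ t in (0:ℝ)..1, f t) = 0 := by
  rw [intervalIntegral.integral_of_le (by norm_num : (0:ℝ) ≤ 1),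
    MeasureTheory.integral_Ioc_eq_integral_Ioo,
    MeasureTheory.setIntegral_congr_fun measurableSet_Ioo (g := fun _ => (0:ℝ)) h]
  simp

lemma bspline_eq_zero_of_nonpos {m : ℕ} (hm : 1 ≤ m) {x : ℝ} (hx : x ≤ 0) :
    bspline m x = 0 := by
  obtain ⟨j, rfl⟩ : ∃ j, m = j + 1 := ⟨m - 1, by omega⟩
  rw [bspline_succ_apply]
  apply integral01_eq_zero
  intro t ht
  exact bspline_eq_zero_of_lt j (by linarith [ht.1])

lemma bspline_eq_zero_of_ge {m : ℕ} (hm : 1 ≤ m) {x : ℝ} (hx : (m:ℝ) + 1 ≤ x) :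
    bspline m x = 0 := by
  obtain ⟨j, rfl⟩ : ∃ j, m = j + 1 := ⟨m - 1, by omega⟩
  rw [bspline_succ_apply]
  apply integral01_eq_zero
  intro t ht
  apply bspline_eq_zero_of_gt j
  push_cast at hx ⊢
  linarith [ht.2]

lemma icc_insert_left (m : ℕ) (k : ℤ) :
    Finset.Icc (k - ((m:ℤ)+1)) k = insert (k - ((m:ℤ)+1)) (Finset.Icc (k - (m:ℤ)) k) := by
  ext n; simp only [Finset.mem_Icc, Finset.mem_insert]; omega

lemma icc_insert_right (m : ℕ) (k : ℤ) :
    Finset.Icc (k - ((m:ℤ)+1)) k = insert k (Finset.Icc ((k-1) - (m:ℤ)) (k-1)) := by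
  ext n; simp only [Finset.mem_Icc, Finset.mem_insert]; omega

lemma intervalIntegrable_bspline_comp (m : ℕ) (c : ℝ) :
    IntervalIntegrable (fun t => bspline m (c - t)) volume 0 1 := by
  have := (intervalIntegrable_bspline m c (c - 1)).comp_sub_left c
  simpa using this

/-- Partition of unity on each cell. -/
lemma sum_bspline : ∀ (m : ℕ) (k : ℤ) (x : ℝ), x ∈ Set.Ioo (k:ℝ) (k+1) →
    ∑ n ∈ Finset.Icc (k - (m:ℤ)) k, bspline m (x - n) = 1 := by
  intro m
  induction m with
  | zero =>
    intro k x hx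
    simp only [Nat.cast_zero, sub_zero, Finset.Icc_self, Finset.sum_singleton]
    rw [bspline_zero_apply, Set.indicator_of_mem]
    rw [Set.mem_Icc]
    constructor <;> [linarith [hx.1]; linarith [hx.2]]
  | succ m ih =>
    intro k x hx
    push_cast
    have key : ∀ t ∈ Set.Ioo (0:ℝ) 1, t ≠ x - k →
        ∑ n ∈ Finset.Icc (k - ((m:ℤ)+1)) k, bspline m (x - n - t) = 1 := by
      intro t ht hne
      have hy : x - t ≠ (k:ℝ) := fun h => hne (by linarith)
      rcases lt_or_gt_of_ne hy with hlt | hgt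
      · -- x - t ∈ (k-1, k)
        rw [icc_insert_right m k, Finset.sum_insert (by simp only [Finset.mem_Icc]; omega)]
        have h1 : bspline m (x - (k:ℤ) - t) = 0 :=
          bspline_eq_zero_of_lt m (by push_cast; linarith)
        rw [h1, zero_add]
        have h2 : ∀ n ∈ Finset.Icc ((k-1) - (m:ℤ)) (k-1),
            bspline m (x - n - t) = bspline m ((x - t) - ((n:ℤ):ℝ)) := by
          intro n _; congr 1; ring
        rw [Finset.sum_congr rfl h2]
        apply ih (k-1) (x-t)
        constructor
        · push_cast; linarith [ht.2, hx.1]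
        · push_cast; linarith
      · -- x - t ∈ (k, k+1)
        rw [icc_insert_left m k, Finset.sum_insert (by simp only [Finset.mem_Icc]; omega)]
        have h1 : bspline m (x - ((k:ℝ) - ((m:ℝ)+1)) - t) = 0 := by
          apply bspline_eq_zero_of_gt m; linarith
        have h1' : bspline m (x - ((k - ((m:ℤ)+1) : ℤ) : ℝ) - t) = 0 := by
          rw [show ((k - ((m:ℤ)+1) : ℤ) : ℝ) = (k:ℝ) - ((m:ℝ)+1) by push_cast; ring]
          exact h1
        rw [h1', zero_add]
        have h2 : ∀ n ∈ Finset.Icc (k - (m:ℤ)) k,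
            bspline m (x - n - t) = bspline m ((x - t) - ((n:ℤ):ℝ)) := by
          intro n _; congr 1; ring
        rw [Finset.sum_congr rfl h2]
        apply ih k (x-t)
        constructor
        · exact hgt
        · push_cast; linarith [ht.1, hx.2]
    have hsplit : ∀ n ∈ Finset.Icc (k - ((m:ℤ)+1)) k,
        bspline (m+1) (x - n) = ∫ t in (0:ℝ)..1, bspline m (x - n - t) := by
      intro n _
      rw [bspline_succ_apply]
    calc ∑ n ∈ Finset.Icc (k - ((m:ℤ)+1)) k, bspline (m+1) (x - n)
        = ∑ n ∈ Finset.Icc (k - ((m:ℤ)+1)) k, ∫ t in (0:ℝ)..1, bspline m (x - n - t) :=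
          Finset.sum_congr rfl hsplit
      _ = ∫ t in (0:ℝ)..1, ∑ n ∈ Finset.Icc (k - ((m:ℤ)+1)) k, bspline m (x - n - t) := by
          rw [intervalIntegral.integral_finset_sum]
          intro n _
          exact intervalIntegrable_bspline_comp m (x - n)
      _ = 1 := by
          rw [intervalIntegral.integral_of_le (by norm_num : (0:ℝ) ≤ 1),
            MeasureTheory.integral_Ioc_eq_integral_Ioo]
          have hae : ∀ᵐ t : ℝ, t ∈ Set.Ioo (0:ℝ) 1 →
              (∑ n ∈ Finset.Icc (k - ((m:ℤ)+1)) k, bspline m (x - n - t)) = 1 := by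
            filter_upwards [(Set.countable_singleton (x - k)).ae_notMem volume] with t ht hmem
            exact key t hmem (by simpa using ht)
          rw [MeasureTheory.setIntegral_congr_ae measurableSet_Ioo hae]
          simp

lemma hasDerivAt_bspline (m : ℕ) {x : ℝ} (hx : ∀ z : ℤ, x ≠ (z : ℝ)) :
    HasDerivAt (bspline (m+1)) (bspline m x - bspline m (x-1)) x := by
  have hx' : ∀ z : ℤ, x - 1 ≠ (z : ℝ) := by
    intro z h
    have := hx (z + 1)
    push_cast at this
    apply this; linarith
  have h1 : HasDerivAt (fun y => ∫ s in (0:ℝ)..y, bspline m s) (bspline m x) x :=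
    intervalIntegral.integral_hasDerivAt_right (intervalIntegrable_bspline m 0 x)
      ((measurable_bspline m).stronglyMeasurable.stronglyMeasurableAtFilter)
      (continuousAt_bspline_nonint m hx)
  have h1' : HasDerivAt (fun y => ∫ s in (0:ℝ)..y, bspline m s) (bspline m (x-1)) (x-1) :=
    intervalIntegral.integral_hasDerivAt_right (intervalIntegrable_bspline m 0 (x-1))
      ((measurable_bspline m).stronglyMeasurable.stronglyMeasurableAtFilter)
      (continuousAt_bspline_nonint m hx')
  have h2 : HasDerivAt (fun y : ℝ => y - 1) 1 x := (hasDerivAt_id x).sub_const 1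
  have h3 := h1'.comp x h2
  have h4 : HasDerivAt (fun y => ∫ s in (0:ℝ)..(y-1), bspline m s) (bspline m (x-1)) x := by
    rw [mul_one] at h3; exact h3
  have heq : bspline (m+1) = fun y => (∫ s in (0:ℝ)..y, bspline m s)
      - ∫ s in (0:ℝ)..(y-1), bspline m s := funext (bspline_succ_eq m)
  rw [heq]
  exact h1.sub h4

lemma nonint_of_mem_cell {k : ℤ} {x : ℝ} (hx : x ∈ Set.Ioo (k:ℝ) (k+1)) :
    ∀ z : ℤ, x ≠ (z : ℝ) := by
  intro z h
  subst h
  obtain ⟨h1, h2⟩ := hx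
  have h1' : k < z := by exact_mod_cast h1
  have h2' : (z:ℝ) < ((k+1 : ℤ) : ℝ) := by push_cast; linarith
  have : z < k + 1 := by exact_mod_cast h2'
  omega

lemma bspline_local_indep : ∀ (m : ℕ) (k : ℤ) (a : ℤ → ℝ),
    (∀ x ∈ Set.Ioo (k:ℝ) (k+1), ∑ n ∈ Finset.Icc (k - (m:ℤ)) k, a n * bspline m (x - n) = 0) →
    ∀ n ∈ Finset.Icc (k - (m:ℤ)) k, a n = 0 := by
  intro m
  induction m with
  | zero =>
    intro k a h n hn
    simp only [Nat.cast_zero, sub_zero, Finset.Icc_self, Finset.mem_singleton] at hn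
    rw [hn]
    have hx : ((k:ℝ) + 1/2) ∈ Set.Ioo (k:ℝ) (k+1) := by constructor <;> norm_num
    have := h _ hx
    simp only [Nat.cast_zero, sub_zero, Finset.Icc_self, Finset.sum_singleton] at this
    rw [show (k:ℝ) + 1/2 - (k:ℝ) = 1/2 by push_cast; ring] at this
    rw [bspline_zero_apply, Set.indicator_of_mem (by rw [Set.mem_Icc]; norm_num)] at this
    simpa using this
  | succ m ih =>
    intro k a h
    -- derivative is zero on the cell
    have hder : ∀ x ∈ Set.Ioo (k:ℝ) (k+1),
        ∑ n ∈ Finset.Icc (k - ((m:ℤ)+1)) k,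
          a n * (bspline m (x - n) - bspline m (x - n - 1)) = 0 := by
      intro x hx
      have hnonint := nonint_of_mem_cell hx
      have hg : HasDerivAt (fun y => ∑ n ∈ Finset.Icc (k - ((m:ℤ)+1)) k,
          a n * bspline (m+1) (y - n))
          (∑ n ∈ Finset.Icc (k - ((m:ℤ)+1)) k,
            a n * (bspline m (x - n) - bspline m (x - n - 1))) x := by
        apply HasDerivAt.fun_sum
        intro n _
        have hnon' : ∀ z : ℤ, x - (n:ℝ) ≠ (z : ℝ) := by
          intro z hz
          have := hnonint (z + n)
          push_cast at this
          apply this; linarith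
        have hin := hasDerivAt_bspline m hnon'
        have hlin : HasDerivAt (fun y : ℝ => y - (n:ℝ)) 1 x := (hasDerivAt_id x).sub_const _
        have := (hin.comp x hlin).const_mul (a n)
        simpa [Function.comp, sub_sub] using this
      have h0 : HasDerivAt (fun y => ∑ n ∈ Finset.Icc (k - ((m:ℤ)+1)) k,
          a n * bspline (m+1) (y - n)) 0 x := by
        apply HasDerivAt.congr_of_eventuallyEq (hasDerivAt_const x (0:ℝ))
        filter_upwards [Ioo_mem_nhds hx.1 hx.2] with y hy
        have := h y hy
        push_cast at this ⊢
        exact this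
      exact hg.unique h0
    -- rewrite as a combination of degree-m splines
    have hder2 : ∀ x ∈ Set.Ioo (k:ℝ) (k+1),
        ∑ n ∈ Finset.Icc (k - (m:ℤ)) k, (a n - a (n-1)) * bspline m (x - n) = 0 := by
      intro x hx
      have hd := hder x hx
      have hS : ∑ n ∈ Finset.Icc (k - ((m:ℤ)+1)) k,
            a n * (bspline m (x - n) - bspline m (x - n - 1))
          = (∑ n ∈ Finset.Icc (k - ((m:ℤ)+1)) k, a n * bspline m (x - n))
            - ∑ n ∈ Finset.Icc (k - ((m:ℤ)+1)) k, a n * bspline m (x - n - 1) := by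
        rw [← Finset.sum_sub_distrib]
        apply Finset.sum_congr rfl
        intro n _; ring
      have hS1 : ∑ n ∈ Finset.Icc (k - ((m:ℤ)+1)) k, a n * bspline m (x - n)
          = ∑ n ∈ Finset.Icc (k - (m:ℤ)) k, a n * bspline m (x - n) := by
        rw [icc_insert_left m k, Finset.sum_insert (by simp only [Finset.mem_Icc]; omega)]
        have : bspline m (x - ((k - ((m:ℤ)+1) : ℤ) : ℝ)) = 0 := by
          apply bspline_eq_zero_of_gt m
          push_cast
          linarith [hx.1]
        rw [this, mul_zero, zero_add]
      have hS2 : ∑ n ∈ Finset.Icc (k - ((m:ℤ)+1)) k, a n * bspline m (x - n - 1)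
          = ∑ n ∈ Finset.Icc (k - (m:ℤ)) k, a (n-1) * bspline m (x - n) := by
        have hmap : Finset.Icc (k - (m:ℤ)) (k+1)
            = Finset.map (addRightEmbedding 1) (Finset.Icc (k - ((m:ℤ)+1)) k) := by
          rw [Finset.map_add_right_Icc]
          congr 1 <;> omega
        have : ∑ n ∈ Finset.Icc (k - (m:ℤ)) (k+1), a (n-1) * bspline m (x - n)
            = ∑ n ∈ Finset.Icc (k - ((m:ℤ)+1)) k, a n * bspline m (x - n - 1) := by
          rw [hmap, Finset.sum_map]
          apply Finset.sum_congr rfl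
          intro n _
          simp only [addRightEmbedding_apply]
          rw [show n + 1 - 1 = n by omega]
          congr 1
          push_cast; ring
        rw [← this]
        rw [show Finset.Icc (k - (m:ℤ)) (k+1) = insert (k+1) (Finset.Icc (k - (m:ℤ)) k) by
          ext n; simp only [Finset.mem_Icc, Finset.mem_insert]; omega,
          Finset.sum_insert (by simp only [Finset.mem_Icc]; omega)]
        have : bspline m (x - ((k+1 : ℤ) : ℝ)) = 0 := by
          apply bspline_eq_zero_of_lt m
          push_cast
          linarith [hx.2]
        rw [this, mul_zero, zero_add]
      rw [hS, hS1, hS2, ← Finset.sum_sub_distrib] at hd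
      rw [← hd]
      apply Finset.sum_congr rfl
      intro n _; ring
    have hb := ih k (fun n => a n - a (n-1)) hder2
    -- a is constant on the index range
    have hconst : ∀ j : ℕ, ∀ n : ℤ, n = k - j → k - ((m:ℤ)+1) ≤ n → a n = a k := by
      intro j
      induction j with
      | zero => intro n hn _; rw [hn]; simp
      | succ j ihj =>
        intro n hn hge
        have hnk : n + 1 ∈ Finset.Icc (k - (m:ℤ)) k := by
          simp only [Finset.mem_Icc]; omega
        have := hb (n+1) hnk
        have han : a n = a (n+1) := by
          have h' : a (n+1) - a (n+1-1) = 0 := this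
          rw [show n+1-1 = n by omega] at h'
          linarith
        rw [han]
        exact ihj (n+1) (by omega) (by omega)
    have hconst' : ∀ n ∈ Finset.Icc (k - ((m:ℤ)+1)) k, a n = a k := by
      intro n hn
      simp only [Finset.mem_Icc] at hn
      exact hconst (k - n).toNat n (by omega) (by omega)
    -- conclude a k = 0 by partition of unity
    have hx : ((k:ℝ) + 1/2) ∈ Set.Ioo (k:ℝ) (k+1) := by constructor <;> norm_num
    have hsum := h _ hx
    have : ∑ n ∈ Finset.Icc (k - ((m:ℤ)+1)) k, a n * bspline (m+1) ((k:ℝ) + 1/2 - n)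
        = a k * ∑ n ∈ Finset.Icc (k - ((m:ℤ)+1)) k, bspline (m+1) ((k:ℝ) + 1/2 - n) := by
      rw [Finset.mul_sum]
      apply Finset.sum_congr rfl
      intro n hn
      rw [hconst' n hn]
    have hpu := sum_bspline (m+1) k ((k:ℝ) + 1/2) hx
    push_cast at hsum this hpu
    rw [this, hpu, mul_one] at hsum
    intro n hn
    rw [show ((m:ℤ)+1) = ((m+1 : ℕ) : ℤ) by push_cast; ring] at hconst'
    rw [hconst' n hn, hsum]

lemma poly_antideriv (p : Polynomial ℝ) : ∃ q : Polynomial ℝ, q.derivative = p := by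
  induction p using Polynomial.induction_on' with
  | add p q hp hq =>
    obtain ⟨P, hP⟩ := hp
    obtain ⟨Q, hQ⟩ := hq
    exact ⟨P + Q, by rw [Polynomial.derivative_add, hP, hQ]⟩
  | monomial n a =>
    refine ⟨Polynomial.monomial (n+1) (a / (n+1)), ?_⟩
    rw [Polynomial.derivative_monomial]
    have hne : ((n:ℝ) + 1) ≠ 0 := by positivity
    rw [show (n + 1 - 1 : ℕ) = n by omega]
    congr 1
    push_cast
    field_simp

lemma integral_poly (p q : Polynomial ℝ) (hq : q.derivative = p) (a b : ℝ) :
    (∫ s in a..b, p.eval s) = q.eval b - q.eval a := by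
  apply intervalIntegral.integral_eq_sub_of_hasDerivAt
  · intro x _
    have := q.hasDerivAt x
    rw [hq] at this
    exact this
  · exact (Polynomial.continuous p).intervalIntegrable _ _

lemma exists_poly : ∀ (m : ℕ) (j : ℤ), ∃ p : Polynomial ℝ,
    ∀ x ∈ Set.Ioo (j:ℝ) ((j:ℝ)+1), bspline m x = p.eval x := by
  intro m
  induction m with
  | zero =>
    intro j
    by_cases hj : j = 0
    · subst hj
      refine ⟨Polynomial.C 1, ?_⟩
      intro x hx
      simp only [Int.cast_zero] at hx
      rw [bspline_zero_apply, Set.indicator_of_mem (Set.mem_Icc.2 ⟨hx.1.le, by linarith [hx.2]⟩)]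
      simp
    · refine ⟨0, ?_⟩
      intro x hx
      simp only [Polynomial.eval_zero]
      rcases lt_or_gt_of_ne (fun h : j = 0 => hj h) with h | h
      · apply bspline_eq_zero_of_lt
        have : (j:ℝ) + 1 ≤ 0 := by
          have : (j:ℝ) ≤ -1 := by exact_mod_cast (by omega : j ≤ -1)
          linarith
        linarith [hx.2]
      · apply bspline_eq_zero_of_gt
        have : (1:ℝ) ≤ (j:ℝ) := by exact_mod_cast (by omega : 1 ≤ j)
        push_cast
        linarith [hx.1]
  | succ m ih =>
    intro j
    obtain ⟨pj, hpj⟩ := ih j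
    obtain ⟨pj1, hpj1⟩ := ih (j-1)
    obtain ⟨qj, hqj⟩ := poly_antideriv pj
    obtain ⟨qj1, hqj1⟩ := poly_antideriv pj1
    set A : ℝ := ∫ s in (0:ℝ)..(j:ℝ), bspline m s with hA
    set B : ℝ := ∫ s in (0:ℝ)..((j:ℝ)-1), bspline m s with hB
    refine ⟨Polynomial.C (A - qj.eval (j:ℝ) - B + qj1.eval ((j:ℝ)-1)) + qj
      - qj1.comp (Polynomial.X - Polynomial.C 1), ?_⟩
    intro x hx
    have hFx : (∫ s in (0:ℝ)..x, bspline m s) = A + (qj.eval x - qj.eval (j:ℝ)) := by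
      rw [← intervalIntegral.integral_add_adjacent_intervals
        (intervalIntegrable_bspline m 0 (j:ℝ)) (intervalIntegrable_bspline m (j:ℝ) x), ← hA]
      congr 1
      have h1 : (∫ s in (j:ℝ)..x, bspline m s) = ∫ s in (j:ℝ)..x, pj.eval s := by
        rw [intervalIntegral.integral_of_le hx.1.le, intervalIntegral.integral_of_le hx.1.le,
          MeasureTheory.integral_Ioc_eq_integral_Ioo, MeasureTheory.integral_Ioc_eq_integral_Ioo]
        apply MeasureTheory.setIntegral_congr_fun measurableSet_Ioo
        intro s hs
        exact hpj s ⟨hs.1, lt_trans hs.2 hx.2⟩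
      rw [h1, integral_poly pj qj hqj]
    have hFx1 : (∫ s in (0:ℝ)..(x-1), bspline m s)
        = B + (qj1.eval (x-1) - qj1.eval ((j:ℝ)-1)) := by
      rw [← intervalIntegral.integral_add_adjacent_intervals
        (intervalIntegrable_bspline m 0 ((j:ℝ)-1)) (intervalIntegrable_bspline m ((j:ℝ)-1) (x-1)),
        ← hB]
      congr 1
      have hle : (j:ℝ) - 1 ≤ x - 1 := by linarith [hx.1]
      have h1 : (∫ s in ((j:ℝ)-1)..(x-1), bspline m s)
          = ∫ s in ((j:ℝ)-1)..(x-1), pj1.eval s := by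
        rw [intervalIntegral.integral_of_le hle, intervalIntegral.integral_of_le hle,
          MeasureTheory.integral_Ioc_eq_integral_Ioo, MeasureTheory.integral_Ioc_eq_integral_Ioo]
        apply MeasureTheory.setIntegral_congr_fun measurableSet_Ioo
        intro s hs
        apply hpj1 s
        constructor
        · push_cast; exact hs.1
        · push_cast; linarith [hs.2, hx.2]
      rw [h1, integral_poly pj1 qj1 hqj1]
    rw [bspline_succ_eq, hFx, hFx1]
    simp only [Polynomial.eval_add, Polynomial.eval_sub, Polynomial.eval_comp, Polynomial.eval_C,
      Polynomial.eval_X]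
    ring

/-- The spline `Σ_{n=N₁-m}^{N₂-1} cₙ φ_m(x-n)`. -/
noncomputable def splineFun (m : ℕ) (N₁ N₂ : ℤ) (c : ℤ → ℝ) (x : ℝ) : ℝ :=
  ∑ n ∈ Finset.Icc (N₁ - m) (N₂ - 1), c n * bspline m (x - n)

lemma splineFun_local (m : ℕ) (N₁ N₂ : ℤ) (c : ℤ → ℝ) (k : ℤ) (hk1 : N₁ ≤ k)
    (hk2 : k ≤ N₂ - 1) {x : ℝ} (hx : x ∈ Set.Ioo (k:ℝ) ((k:ℝ)+1)) :
    splineFun m N₁ N₂ c x = ∑ n ∈ Finset.Icc (k - (m:ℤ)) k, c n * bspline m (x - n) := by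
  rw [splineFun]
  apply (Finset.sum_subset ?_ ?_).symm
  · intro n hn
    simp only [Finset.mem_Icc] at hn ⊢
    omega
  · intro n hn hns
    simp only [Finset.mem_Icc] at hn hns
    rcases (by omega : n ≤ k - (m:ℤ) - 1 ∨ k + 1 ≤ n) with h | h
    · have hnr : (n:ℝ) ≤ (k:ℝ) - (m:ℝ) - 1 := by exact_mod_cast h
      rw [bspline_eq_zero_of_gt m (by linarith [hx.1]), mul_zero]
    · have hnr : (k:ℝ) + 1 ≤ (n:ℝ) := by exact_mod_cast h
      rw [bspline_eq_zero_of_lt m (by linarith [hx.2]), mul_zero]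

lemma coeffs_zero_of_cell_zero {m : ℕ} {N₁ N₂ : ℤ} {c : ℤ → ℝ} {k : ℤ} (hk1 : N₁ ≤ k)
    (hk2 : k ≤ N₂ - 1) (h : ∀ x ∈ Set.Ioo (k:ℝ) ((k:ℝ)+1), splineFun m N₁ N₂ c x = 0) :
    ∀ n ∈ Finset.Icc (k - (m:ℤ)) k, c n = 0 := by
  apply bspline_local_indep m k c
  intro x hx
  rw [← splineFun_local m N₁ N₂ c k hk1 hk2 hx]
  exact h x hx

lemma exists_poly_splineFun (m : ℕ) (N₁ N₂ : ℤ) (c : ℤ → ℝ) (k : ℤ) (hk1 : N₁ ≤ k)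
    (hk2 : k ≤ N₂ - 1) : ∃ p : Polynomial ℝ,
    ∀ x ∈ Set.Ioo (k:ℝ) ((k:ℝ)+1), splineFun m N₁ N₂ c x = p.eval x := by
  choose P hP using exists_poly m
  refine ⟨∑ n ∈ Finset.Icc (k - (m:ℤ)) k,
    Polynomial.C (c n) * (P (k - n)).comp (Polynomial.X - Polynomial.C (n:ℝ)), ?_⟩
  intro x hx
  rw [splineFun_local m N₁ N₂ c k hk1 hk2 hx, Polynomial.eval_finset_sum]
  apply Finset.sum_congr rfl
  intro n _
  rw [Polynomial.eval_mul, Polynomial.eval_C, Polynomial.eval_comp, Polynomial.eval_sub,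
    Polynomial.eval_X, Polynomial.eval_C]
  congr 1
  apply hP (k - n) (x - n)
  constructor
  · push_cast; linarith [hx.1]
  · push_cast; linarith [hx.2]

lemma bspline_ne_zero_cell (m : ℕ) (j : ℕ) (hj : j ≤ m) :
    ∃ t ∈ Set.Ioo ((j:ℤ):ℝ) (((j:ℤ):ℝ)+1), bspline m t ≠ 0 := by
  by_contra hcon
  push_neg at hcon
  have hind := bspline_local_indep m (j:ℤ) (fun n => if n = 0 then 1 else 0) ?_ 0
    (by simp only [Finset.mem_Icc]; omega)
  · simpa using hind
  · intro x hx
    have hterm : ∀ n ∈ Finset.Icc ((j:ℤ) - (m:ℤ)) (j:ℤ),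
        (if n = 0 then (1:ℝ) else 0) * bspline m (x - n)
          = if n = 0 then bspline m (x - n) else 0 := by
      intro n _
      split <;> simp
    rw [Finset.sum_congr rfl hterm, Finset.sum_ite_eq' (Finset.Icc ((j:ℤ) - (m:ℤ)) (j:ℤ)) 0
      (fun n => bspline m (x - (n:ℝ)))]
    rw [if_pos (by simp only [Finset.mem_Icc]; omega)]
    simpa using hcon x hx

lemma continuous_splineFun (m : ℕ) (hm : 1 ≤ m) (N₁ N₂ : ℤ) (c : ℤ → ℝ) :
    Continuous (splineFun m N₁ N₂ c) := by
  obtain ⟨j, rfl⟩ : ∃ j, m = j + 1 := ⟨m - 1, by omega⟩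
  apply continuous_finset_sum
  intro n _
  exact continuous_const.mul ((continuous_bspline_succ j).comp (continuous_id.sub continuous_const))

lemma exists_nonint_mem {a b : ℝ} (hab : a < b) :
    ∃ y ∈ Set.Ioo a b, ∀ z : ℤ, y ≠ (z:ℝ) := by
  by_cases hc : ∃ z : ℤ, (a+b)/2 = (z:ℝ)
  · obtain ⟨z, hz⟩ := hc
    set δ := min (b - (a+b)/2) 1 / 2 with hδ
    have hbpos : 0 < b - (a+b)/2 := by linarith
    have hδpos : 0 < δ := by positivity
    have hmin1 : min (b - (a+b)/2) 1 ≤ b - (a+b)/2 := min_le_left _ _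
    have hmin2 : min (b - (a+b)/2) 1 ≤ 1 := min_le_right _ _
    have hδle : δ ≤ (b - (a+b)/2)/2 := by rw [hδ]; linarith
    refine ⟨(a+b)/2 + δ, ⟨by linarith, by linarith⟩, ?_⟩
    intro w hw
    rw [hz] at hw
    have h1 : (0:ℝ) < (w:ℝ) - (z:ℝ) := by linarith
    have h2 : (w:ℝ) - (z:ℝ) ≤ 1/2 := by
      have : δ ≤ 1/2 := by rw [hδ]; linarith
      linarith
    have h1' : z < w := by exact_mod_cast (by linarith : (z:ℝ) < w)
    have h2' : (w:ℝ) < (z:ℝ) + 1 := by linarith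
    have : w < z + 1 := by exact_mod_cast (by push_cast; linarith : (w:ℝ) < ((z+1:ℤ):ℝ))
    omega
  · push_neg at hc
    exact ⟨(a+b)/2, ⟨by linarith, by linarith⟩, hc⟩

lemma exists_cell_ne_zero {m : ℕ} {N₁ N₂ : ℤ} {c : ℤ → ℝ} (hm : 1 ≤ m) (hN : N₁ < N₂)
    (h : ∃ x ∈ Set.Icc (N₁:ℝ) (N₂:ℝ), splineFun m N₁ N₂ c x ≠ 0) :
    ∃ k : ℤ, N₁ ≤ k ∧ k ≤ N₂ - 1 ∧
      ∃ y ∈ Set.Ioo (k:ℝ) ((k:ℝ)+1), splineFun m N₁ N₂ c y ≠ 0 := by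
  obtain ⟨x₀, hx₀, hne⟩ := h
  have hcont := continuous_splineFun m hm N₁ N₂ c
  have hopen : IsOpen {y : ℝ | splineFun m N₁ N₂ c y ≠ 0} :=
    isOpen_compl_iff.mpr (isClosed_eq hcont continuous_const)
  obtain ⟨ε, hε, hball⟩ := Metric.isOpen_iff.mp hopen x₀ hne
  have hN' : (N₁:ℝ) < (N₂:ℝ) := by exact_mod_cast hN
  have hab : max (N₁:ℝ) (x₀ - ε) < min (N₂:ℝ) (x₀ + ε) := by
    apply max_lt <;> apply lt_min
    · exact hN'
    · linarith [hx₀.1]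
    · linarith [hx₀.2]
    · linarith
  obtain ⟨y, hy, hynon⟩ := exists_nonint_mem hab
  have hy1 : (N₁:ℝ) < y := lt_of_le_of_lt (le_max_left _ _) hy.1
  have hy2 : y < (N₂:ℝ) := lt_of_lt_of_le hy.2 (min_le_left _ _)
  have hy3 : x₀ - ε < y := lt_of_le_of_lt (le_max_right _ _) hy.1
  have hy4 : y < x₀ + ε := lt_of_lt_of_le hy.2 (min_le_right _ _)
  have hymem : y ∈ Metric.ball x₀ ε := by
    rw [Metric.mem_ball, Real.dist_eq, abs_lt]
    constructor <;> linarith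
  refine ⟨⌊y⌋, ?_, ?_, y, ⟨?_, ?_⟩, hball hymem⟩
  · exact Int.le_floor.mpr hy1.le
  · have : (⌊y⌋ : ℝ) < (N₂:ℝ) := lt_of_le_of_lt (Int.floor_le y) hy2
    have : ⌊y⌋ < N₂ := by exact_mod_cast this
    omega
  · exact lt_of_le_of_ne (Int.floor_le y) (Ne.symm (hynon ⌊y⌋))
  · linarith [Int.lt_floor_add_one y]

/-- On each cell, the coefficients of one of the two factors vanish. -/
lemma cell_dichotomy {m : ℕ} {N₁ N₂ : ℤ} {c₁ c₂ : ℤ → ℝ} {k : ℤ} (hk1 : N₁ ≤ k)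
    (hk2 : k ≤ N₂ - 1)
    (hz : ∀ x ∈ Set.Icc (N₁:ℝ) (N₂:ℝ),
      splineFun m N₁ N₂ c₁ x * splineFun m N₁ N₂ c₂ x = 0) :
    (∀ n ∈ Finset.Icc (k - (m:ℤ)) k, c₁ n = 0) ∨ (∀ n ∈ Finset.Icc (k - (m:ℤ)) k, c₂ n = 0) := by
  obtain ⟨p₁, hp₁⟩ := exists_poly_splineFun m N₁ N₂ c₁ k hk1 hk2
  obtain ⟨p₂, hp₂⟩ := exists_poly_splineFun m N₁ N₂ c₂ k hk1 hk2
  have hsub : Set.Ioo (k:ℝ) ((k:ℝ)+1) ⊆ Set.Icc (N₁:ℝ) (N₂:ℝ) := by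
    intro x hx
    have h1 : ((N₁:ℤ):ℝ) ≤ (k:ℝ) := by exact_mod_cast hk1
    have h2 : ((k:ℤ):ℝ) + 1 ≤ (N₂:ℝ) := by
      have : (k:ℝ) + 1 ≤ ((N₂:ℤ):ℝ) := by exact_mod_cast (by omega : k + 1 ≤ N₂)
      exact_mod_cast this
    exact ⟨by linarith [hx.1], by linarith [hx.2]⟩
  have hroots : ∀ x ∈ Set.Ioo (k:ℝ) ((k:ℝ)+1), (p₁ * p₂).eval x = 0 := by
    intro x hx
    rw [Polynomial.eval_mul, ← hp₁ x hx, ← hp₂ x hx]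
    exact hz x (hsub hx)
  have hmul : p₁ * p₂ = 0 := by
    apply Polynomial.eq_zero_of_infinite_isRoot
    exact Set.Infinite.mono (fun x hx => hroots x hx)
      (Set.Ioo_infinite (by linarith : (k:ℝ) < (k:ℝ)+1))
  rcases mul_eq_zero.mp hmul with h | h
  · left
    apply coeffs_zero_of_cell_zero hk1 hk2
    intro x hx
    rw [hp₁ x hx, h, Polynomial.eval_zero]
  · right
    apply coeffs_zero_of_cell_zero hk1 hk2
    intro x hx
    rw [hp₂ x hx, h, Polynomial.eval_zero]

lemma reverse_direction {m : ℕ} (hm : 1 ≤ m) {N₁ N₂ : ℤ} (hN : N₁ < N₂) (c : ℤ → ℝ)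
    {n₁ n₂ : ℤ} (h₁ : N₁ - m ≤ n₁) (h₂ : n₂ ≤ N₂ - 1) (hgap : (m : ℤ) + 1 ≤ n₂ - n₁)
    (hc₁ : c n₁ ≠ 0) (hc₂ : c n₂ ≠ 0) (hmid : ∀ n : ℤ, n₁ < n → n < n₂ → c n = 0) :
    ∃ c₁ c₂ : ℤ → ℝ,
      (∀ x ∈ Set.Icc (N₁ : ℝ) N₂,
        splineFun m N₁ N₂ c x = splineFun m N₁ N₂ c₁ x + splineFun m N₁ N₂ c₂ x) ∧
      (∃ x ∈ Set.Icc (N₁ : ℝ) N₂, splineFun m N₁ N₂ c₁ x ≠ 0) ∧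
      (∃ x ∈ Set.Icc (N₁ : ℝ) N₂, splineFun m N₁ N₂ c₂ x ≠ 0) ∧
      (∀ x ∈ Set.Icc (N₁ : ℝ) N₂, splineFun m N₁ N₂ c₁ x * splineFun m N₁ N₂ c₂ x = 0) := by
  classical
  set c₁ : ℤ → ℝ := fun n => if n ≤ n₁ then c n else 0 with hc₁def
  set c₂ : ℤ → ℝ := fun n => c n - c₁ n with hc₂def
  have hc₂n : ∀ n : ℤ, n < n₂ → c₂ n = 0 := by
    intro n hn
    by_cases hle : n ≤ n₁
    · simp [hc₂def, hc₁def, hle]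
    · push_neg at hle
      simp [hc₂def, hc₁def, not_le.mpr hle, hmid n hle hn]
  have hc₂eq : ∀ n : ℤ, n₂ ≤ n → c₂ n = c n := by
    intro n hn
    have : ¬ (n ≤ n₁) := by omega
    simp [hc₂def, hc₁def, this]
  refine ⟨c₁, c₂, ?_, ?_, ?_, ?_⟩
  · intro x _
    rw [splineFun, splineFun, splineFun, ← Finset.sum_add_distrib]
    apply Finset.sum_congr rfl
    intro n _
    simp only [hc₂def]
    ring
  · -- c₁ part is nonzero somewhere
    obtain ⟨t, ht, htne⟩ := bspline_ne_zero_cell m m le_rfl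
    have htm : ((m:ℤ):ℝ) = (m:ℝ) := by push_cast; ring
    rw [htm] at ht
    refine ⟨(n₁:ℝ) + t, ⟨?_, ?_⟩, ?_⟩
    · have : ((N₁:ℤ):ℝ) - (m:ℝ) ≤ (n₁:ℝ) := by exact_mod_cast h₁
      linarith [ht.1]
    · have : (n₁:ℝ) + (m:ℝ) + 1 ≤ (N₂:ℝ) - 1 + 1 := by
        have : ((n₁ + m + 1 : ℤ) : ℝ) ≤ ((N₂ : ℤ) : ℝ) := by exact_mod_cast (by omega : n₁ + (m:ℤ) + 1 ≤ N₂)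
        push_cast at this ⊢
        linarith
      linarith [ht.2]
    · rw [splineFun]
      rw [Finset.sum_eq_single n₁]
      · have harg : (n₁:ℝ) + t - (n₁:ℝ) = t := by ring
        rw [harg]
        simp only [hc₁def, le_refl, if_true]
        exact mul_ne_zero hc₁ htne
      · intro n hn hne
        rcases lt_or_gt_of_ne hne with hlt | hgt
        · have : (m:ℝ) + 1 ≤ (n₁:ℝ) + t - (n:ℝ) := by
            have : (n:ℝ) + 1 ≤ (n₁:ℝ) := by exact_mod_cast (by omega : n + 1 ≤ n₁)
            linarith [ht.1]
          rw [bspline_eq_zero_of_ge hm this, mul_zero]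
        · simp only [hc₁def, if_neg (by omega : ¬ (n ≤ n₁))]
          ring
      · intro hnot
        exfalso
        apply hnot
        simp only [Finset.mem_Icc]
        omega
  · -- c₂ part is nonzero somewhere
    obtain ⟨t, ht, htne⟩ := bspline_ne_zero_cell m 0 (by omega)
    have ht' : t ∈ Set.Ioo (0:ℝ) 1 := by
      constructor
      · have := ht.1; push_cast at this; linarith
      · have := ht.2; push_cast at this; linarith
    refine ⟨(n₂:ℝ) + t, ⟨?_, ?_⟩, ?_⟩
    · have : ((N₁ + 1 : ℤ) : ℝ) ≤ ((n₂ : ℤ) : ℝ) := by exact_mod_cast (by omega : N₁ + 1 ≤ n₂)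
      push_cast at this
      linarith [ht'.1]
    · have : ((n₂ + 1 : ℤ) : ℝ) ≤ ((N₂ : ℤ) : ℝ) := by exact_mod_cast (by omega : n₂ + 1 ≤ N₂)
      push_cast at this
      linarith [ht'.2]
    · rw [splineFun]
      rw [Finset.sum_eq_single n₂]
      · have harg : (n₂:ℝ) + t - (n₂:ℝ) = t := by ring
        rw [harg, hc₂eq n₂ le_rfl]
        exact mul_ne_zero hc₂ htne
      · intro n hn hne
        rcases lt_or_gt_of_ne hne with hlt | hgt
        · rw [hc₂n n hlt, zero_mul]
        · have : (n₂:ℝ) + t - (n:ℝ) < 0 := by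
            have : (n₂:ℝ) + 1 ≤ (n:ℝ) := by exact_mod_cast (by omega : n₂ + 1 ≤ n)
            linarith [ht'.2]
          rw [bspline_eq_zero_of_lt m this, mul_zero]
      · intro hnot
        exfalso
        apply hnot
        simp only [Finset.mem_Icc]
        omega
  · -- product vanishes
    intro x _
    rcases lt_or_ge x (n₂:ℝ) with hx | hx
    · have : splineFun m N₁ N₂ c₂ x = 0 := by
        rw [splineFun]
        apply Finset.sum_eq_zero
        intro n _
        rcases lt_or_ge n n₂ with hn | hn
        · rw [hc₂n n hn, zero_mul]
        · have : x - (n:ℝ) < 0 := by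
            have : (n₂:ℝ) ≤ (n:ℝ) := by exact_mod_cast hn
            linarith
          rw [bspline_eq_zero_of_lt m this, mul_zero]
      rw [this, mul_zero]
    · have : splineFun m N₁ N₂ c₁ x = 0 := by
        rw [splineFun]
        apply Finset.sum_eq_zero
        intro n _
        rcases le_or_gt n n₁ with hn | hn
        · have : (m:ℝ) + 1 ≤ x - (n:ℝ) := by
            have h1 : ((n + m + 1 : ℤ) : ℝ) ≤ ((n₂ : ℤ) : ℝ) := by
              exact_mod_cast (by omega : n + (m:ℤ) + 1 ≤ n₂)
            push_cast at h1
            linarith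
          rw [bspline_eq_zero_of_ge hm this, mul_zero]
        · simp only [hc₁def, if_neg (not_le.mpr hn)]
          ring
      rw [this, zero_mul]

lemma extract {m : ℕ} {N₁ N₂ : ℤ} (c c₁ c₂ : ℤ → ℝ)
    (hadd : ∀ n ∈ Finset.Icc (N₁ - (m:ℤ)) (N₂ - 1), c n = c₁ n + c₂ n)
    (sep : ∀ p ∈ Finset.Icc (N₁ - (m:ℤ)) (N₂ - 1), ∀ q ∈ Finset.Icc (N₁ - (m:ℤ)) (N₂ - 1),
      c₁ p ≠ 0 → c₂ q ≠ 0 → (m:ℤ) + 1 ≤ |p - q|)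
    {p q : ℤ} (hp : p ∈ Finset.Icc (N₁ - (m:ℤ)) (N₂ - 1)) (hpne : c₁ p ≠ 0)
    (hq : q ∈ Finset.Icc (N₁ - (m:ℤ)) (N₂ - 1)) (hqne : c₂ q ≠ 0) (hpq : p < q) :
    ∃ n₁ n₂ : ℤ, N₁ - (m:ℤ) ≤ n₁ ∧ n₂ ≤ N₂ - 1 ∧ (m : ℤ) + 1 ≤ n₂ - n₁ ∧
      c n₁ ≠ 0 ∧ c n₂ ≠ 0 ∧ ∀ n : ℤ, n₁ < n → n < n₂ → c n = 0 := by
  classical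
  set R := Finset.Icc (N₁ - (m:ℤ)) (N₂ - 1) with hR
  have hexcl : ∀ n ∈ R, ¬ (c₁ n ≠ 0 ∧ c₂ n ≠ 0) := by
    intro n hn ⟨h1, h2⟩
    have := sep n hn n hn h1 h2
    simp at this
    omega
  have hc_of₁ : ∀ n ∈ R, c₁ n ≠ 0 → c n ≠ 0 := by
    intro n hn h1
    have h2 : c₂ n = 0 := by
      by_contra h2
      exact hexcl n hn ⟨h1, h2⟩
    rw [hadd n hn, h2, add_zero]
    exact h1
  have hc_of₂ : ∀ n ∈ R, c₂ n ≠ 0 → c n ≠ 0 := by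
    intro n hn h2
    have h1 : c₁ n = 0 := by
      by_contra h1
      exact hexcl n hn ⟨h1, h2⟩
    rw [hadd n hn, h1, zero_add]
    exact h2
  set T₂ := R.filter (fun n => c₂ n ≠ 0 ∧ p < n) with hT₂
  have hT₂ne : T₂.Nonempty := ⟨q, by rw [hT₂, Finset.mem_filter]; exact ⟨hq, hqne, hpq⟩⟩
  set n₂ := T₂.min' hT₂ne with hn₂def
  obtain ⟨hn₂R, hn₂c, hn₂p⟩ := Finset.mem_filter.mp (T₂.min'_mem hT₂ne)
  set T₁ := R.filter (fun n => c n ≠ 0 ∧ n < n₂) with hT₁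
  have hT₁ne : T₁.Nonempty :=
    ⟨p, by rw [hT₁, Finset.mem_filter]; exact ⟨hp, hc_of₁ p hp hpne, hn₂p⟩⟩
  set n₁ := T₁.max' hT₁ne with hn₁def
  obtain ⟨hn₁R, hn₁c, hn₁lt⟩ := Finset.mem_filter.mp (T₁.max'_mem hT₁ne)
  have hpn₁ : p ≤ n₁ := by
    apply Finset.le_max'
    rw [hT₁, Finset.mem_filter]
    exact ⟨hp, hc_of₁ p hp hpne, hn₂p⟩
  have hc₁n₁ : c₁ n₁ ≠ 0 := by
    by_contra h1
    have h2 : c₂ n₁ ≠ 0 := by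
      intro h2
      apply hn₁c
      rw [hadd n₁ hn₁R, h1, h2, add_zero]
    have hpn₁' : p < n₁ := by
      rcases lt_or_eq_of_le hpn₁ with h | h
      · exact h
      · exfalso; rw [← h] at h2; exact hexcl p hp ⟨hpne, h2⟩
    have : n₂ ≤ n₁ := by
      apply Finset.min'_le
      rw [hT₂, Finset.mem_filter]
      exact ⟨hn₁R, h2, hpn₁'⟩
    omega
  have hsep := sep n₁ hn₁R n₂ hn₂R hc₁n₁ hn₂c
  rw [abs_sub_comm, abs_of_nonneg (by omega : (0:ℤ) ≤ n₂ - n₁)] at hsep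
  simp only [hR, Finset.mem_Icc] at hn₁R hn₂R
  refine ⟨n₁, n₂, hn₁R.1, hn₂R.2, hsep, hn₁c, hc_of₂ n₂ (by rw [hR]; simp only [Finset.mem_Icc]; omega) hn₂c, ?_⟩
  intro n hlt1 hlt2
  by_contra hne
  have hnR : n ∈ R := by rw [hR]; simp only [Finset.mem_Icc]; omega
  have : n ≤ n₁ := by
    apply Finset.le_max'
    rw [hT₁, Finset.mem_filter]
    exact ⟨hnR, hne, hlt2⟩
  omega

lemma cell_subset {N₁ N₂ k : ℤ} (hk1 : N₁ ≤ k) (hk2 : k ≤ N₂ - 1) :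
    Set.Ioo ((k:ℤ):ℝ) (((k:ℤ):ℝ)+1) ⊆ Set.Icc ((N₁:ℤ):ℝ) ((N₂:ℤ):ℝ) := by
  intro x hx
  have h1 : ((N₁:ℤ):ℝ) ≤ ((k:ℤ):ℝ) := by exact_mod_cast hk1
  have h2 : ((k:ℤ):ℝ) + 1 ≤ ((N₂:ℤ):ℝ) := by
    exact_mod_cast (by omega : k + 1 ≤ N₂)
  exact ⟨by linarith [hx.1], by linarith [hx.2]⟩

lemma forward_direction {m : ℕ} (hm : 1 ≤ m) {N₁ N₂ : ℤ} (hN : N₁ < N₂) (c : ℤ → ℝ)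
    (H : ∃ c₁ c₂ : ℤ → ℝ,
      (∀ x ∈ Set.Icc (N₁ : ℝ) N₂,
        splineFun m N₁ N₂ c x = splineFun m N₁ N₂ c₁ x + splineFun m N₁ N₂ c₂ x) ∧
      (∃ x ∈ Set.Icc (N₁ : ℝ) N₂, splineFun m N₁ N₂ c₁ x ≠ 0) ∧
      (∃ x ∈ Set.Icc (N₁ : ℝ) N₂, splineFun m N₁ N₂ c₂ x ≠ 0) ∧
      (∀ x ∈ Set.Icc (N₁ : ℝ) N₂, splineFun m N₁ N₂ c₁ x * splineFun m N₁ N₂ c₂ x = 0)) :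
    2 ≤ N₂ - N₁ ∧ ∃ n₁ n₂ : ℤ, N₁ - (m:ℤ) ≤ n₁ ∧ n₂ ≤ N₂ - 1 ∧ (m : ℤ) + 1 ≤ n₂ - n₁ ∧
      c n₁ ≠ 0 ∧ c n₂ ≠ 0 ∧ ∀ n : ℤ, n₁ < n → n < n₂ → c n = 0 := by
  classical
  obtain ⟨c₁, c₂, haddf, hne₁, hne₂, hz⟩ := H
  -- coefficient additivity
  have hadd : ∀ n ∈ Finset.Icc (N₁ - (m:ℤ)) (N₂ - 1), c n = c₁ n + c₂ n := by
    intro n hn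
    simp only [Finset.mem_Icc] at hn
    set k := max n N₁ with hk
    have hk1 : N₁ ≤ k := le_max_right _ _
    have hk2 : k ≤ N₂ - 1 := by omega
    have hd : ∀ x ∈ Set.Ioo ((k:ℤ):ℝ) (((k:ℤ):ℝ)+1),
        splineFun m N₁ N₂ (fun j => c j - c₁ j - c₂ j) x = 0 := by
      intro x hx
      have hexp : splineFun m N₁ N₂ (fun j => c j - c₁ j - c₂ j) x
          = splineFun m N₁ N₂ c x - splineFun m N₁ N₂ c₁ x - splineFun m N₁ N₂ c₂ x := by
        simp only [splineFun, ← Finset.sum_sub_distrib]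
        apply Finset.sum_congr rfl
        intro j _
        ring
      rw [hexp, haddf x (cell_subset hk1 hk2 hx)]
      ring
    have := coeffs_zero_of_cell_zero hk1 hk2 hd n (by simp only [Finset.mem_Icc]; omega)
    linarith [this]
  -- nonempty coefficient supports
  have hsupp : ∀ (a : ℤ → ℝ), (∃ x ∈ Set.Icc (N₁:ℝ) (N₂:ℝ), splineFun m N₁ N₂ a x ≠ 0) →
      ∃ n ∈ Finset.Icc (N₁ - (m:ℤ)) (N₂ - 1), a n ≠ 0 := by
    intro a ha
    obtain ⟨k, hk1, hk2, y, hy, hyne⟩ := exists_cell_ne_zero hm hN ha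
    by_contra hcon
    push_neg at hcon
    apply hyne
    rw [splineFun_local m N₁ N₂ a k hk1 hk2 hy]
    apply Finset.sum_eq_zero
    intro n hn
    rw [hcon n (by simp only [Finset.mem_Icc] at hn ⊢; omega), zero_mul]
  obtain ⟨p, hpR, hpne⟩ := hsupp c₁ hne₁
  obtain ⟨q, hqR, hqne⟩ := hsupp c₂ hne₂
  -- separation of supports
  have sep : ∀ p' ∈ Finset.Icc (N₁ - (m:ℤ)) (N₂ - 1), ∀ q' ∈ Finset.Icc (N₁ - (m:ℤ)) (N₂ - 1),
      c₁ p' ≠ 0 → c₂ q' ≠ 0 → (m:ℤ) + 1 ≤ |p' - q'| := by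
    intro p' hp' q' hq' hp'ne hq'ne
    by_contra hcon
    push_neg at hcon
    have habs := abs_lt.mp hcon
    simp only [Finset.mem_Icc] at hp' hq'
    set k := max (max p' q') N₁ with hk
    have hk1 : N₁ ≤ k := le_max_right _ _
    have hk2 : k ≤ N₂ - 1 := by omega
    rcases cell_dichotomy hk1 hk2 hz with h | h
    · exact hp'ne (h p' (by simp only [Finset.mem_Icc]; omega))
    · exact hq'ne (h q' (by simp only [Finset.mem_Icc]; omega))
  have hpq_ne : p ≠ q := by
    intro h
    subst h
    have := sep p hpR p hpR hpne hqne
    simp at this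
    omega
  have main : ∃ n₁ n₂ : ℤ, N₁ - (m:ℤ) ≤ n₁ ∧ n₂ ≤ N₂ - 1 ∧ (m : ℤ) + 1 ≤ n₂ - n₁ ∧
      c n₁ ≠ 0 ∧ c n₂ ≠ 0 ∧ ∀ n : ℤ, n₁ < n → n < n₂ → c n = 0 := by
    rcases lt_or_gt_of_ne hpq_ne with hlt | hgt
    · exact extract c c₁ c₂ hadd sep hpR hpne hqR hqne hlt
    · apply extract c c₂ c₁ ?_ ?_ hqR hqne hpR hpne hgt
      · intro n hn; rw [hadd n hn]; ring
      · intro p' hp' q' hq' h2 h1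
        rw [abs_sub_comm]
        exact sep q' hq' p' hp' h1 h2
  obtain ⟨n₁, n₂, hb1, hb2, hb3, h4, h5, h6⟩ := main
  exact ⟨by omega, n₁, n₂, hb1, hb2, hb3, h4, h5, h6⟩

/-- characterization of separable functions in the restricted spline space. -/
theorem stmt_6 (m : ℕ) (hm : 1 ≤ m) (N₁ N₂ : ℤ) (hN : N₁ < N₂) (c : ℤ → ℝ) :
    (∃ c₁ c₂ : ℤ → ℝ,
      (∀ x ∈ Set.Icc (N₁ : ℝ) N₂,
        splineFun m N₁ N₂ c x = splineFun m N₁ N₂ c₁ x + splineFun m N₁ N₂ c₂ x) ∧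
      (∃ x ∈ Set.Icc (N₁ : ℝ) N₂, splineFun m N₁ N₂ c₁ x ≠ 0) ∧
      (∃ x ∈ Set.Icc (N₁ : ℝ) N₂, splineFun m N₁ N₂ c₂ x ≠ 0) ∧
      (∀ x ∈ Set.Icc (N₁ : ℝ) N₂, splineFun m N₁ N₂ c₁ x * splineFun m N₁ N₂ c₂ x = 0)) ↔
    (2 ≤ N₂ - N₁ ∧ ∃ n₁ n₂ : ℤ, N₁ - m ≤ n₁ ∧ n₂ ≤ N₂ - 1 ∧ (m : ℤ) + 1 ≤ n₂ - n₁ ∧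
      c n₁ ≠ 0 ∧ c n₂ ≠ 0 ∧ ∀ n : ℤ, n₁ < n → n < n₂ → c n = 0) := by
  constructor
  · intro H
    exact forward_direction hm hN c H
  · rintro ⟨_, n₁, n₂, hb1, hb2, hb3, hc1, hc2, hmid⟩
    exact reverse_direction hm hN c hb1 hb2 hb3 hc1 hc2 hmid
end

section
/- Let N_1 < N_2 be integers and E ⊂ [N_1, N_2] a finite set of distinct points with #E ≥ N_2 − N_1 + m. Then there exist integers n_1, n_2 ∈ [N_1, N_2] with n_1 < n_2 such that E ∩ [n_1, n_2] is a sampling set for V_m|_{[n_1,n_2]}, i.e., every f ∈ V_m is uniquely determined on [n_1, n_2] by its values on E ∩ [n_1, n_2]. -/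
open Classical in
/-- Number of points of `E` lying in the set `S`. -/
noncomputable def cntIn (E : Finset ℝ) (S : Set ℝ) : ℕ :=
  (E.filter (fun x => x ∈ S)).card

lemma ncard_inter_cntIn (E : Finset ℝ) (S : Set ℝ) :
    ((E : Set ℝ) ∩ S).ncard = cntIn E S := by
  classical
  have h : ((E : Set ℝ) ∩ S) = ↑(E.filter (fun x => x ∈ S)) := by
    ext x; simp
  rw [h, Set.ncard_coe_finset]
  rfl

lemma cntIn_le_add (E : Finset ℝ) (S T U : Set ℝ) (h : ∀ x ∈ S, x ∈ T ∨ x ∈ U) :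
    cntIn E S ≤ cntIn E T + cntIn E U := by
  classical
  unfold cntIn
  calc (E.filter (fun x => x ∈ S)).card
      ≤ ((E.filter (fun x => x ∈ T)) ∪ (E.filter (fun x => x ∈ U))).card := by
        apply Finset.card_le_card
        intro x hx
        simp only [Finset.mem_filter, Finset.mem_union] at *
        rcases h x hx.2 with h' | h' <;> tauto
    _ ≤ _ := Finset.card_union_le _ _

lemma cntIn_le_add3 (E : Finset ℝ) (S T U V : Set ℝ)
    (h : ∀ x ∈ S, x ∈ T ∨ x ∈ U ∨ x ∈ V) :
    cntIn E S ≤ cntIn E T + cntIn E U + cntIn E V := by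
  have h1 : cntIn E S ≤ cntIn E T + cntIn E (U ∪ V) := by
    apply cntIn_le_add
    intro x hx
    rcases h x hx with h' | h' | h' <;> simp [h']
  have h2 : cntIn E (U ∪ V) ≤ cntIn E U + cntIn E V := by
    apply cntIn_le_add
    intro x hx
    simpa using hx
  omega

lemma cntIn_eq_card (E : Finset ℝ) (S : Set ℝ) (h : ∀ x ∈ E, x ∈ S) :
    cntIn E S = E.card := by
  classical
  unfold cntIn
  rw [Finset.filter_true_of_mem h]

lemma cntIn_Icc_self (E : Finset ℝ) (r : ℝ) : cntIn E (Set.Icc r r) ≤ 1 := by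
  classical
  unfold cntIn
  refine Finset.card_le_one.mpr ?_
  intro x hx y hy
  simp only [Finset.mem_filter, Set.mem_Icc] at hx hy
  linarith [hx.2.1, hx.2.2, hy.2.1, hy.2.2]

/-- Schönberg–Whitney characterization of (local) sampling sets for the spline space
`V_m|_{[a,b]}`, taken as the definition. -/
def IsSamplingSet (m a b : ℤ) (F : Set ℝ) : Prop :=
  (b - a + m ≤ (F.ncard : ℤ)) ∧
  (∀ k : ℤ, 0 ≤ k → k ≤ b - a → k ≤ ((F ∩ Set.Ico (a : ℝ) ((a : ℝ) + k)).ncard : ℤ)) ∧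
  (∀ k : ℤ, 0 ≤ k → k ≤ b - a → k ≤ ((F ∩ Set.Ioc ((b : ℝ) - k) (b : ℝ)).ncard : ℤ)) ∧
  (∀ c d : ℤ, a ≤ c → c < d → d ≤ b →
    d - c - m ≤ ((F ∩ Set.Ioo (c : ℝ) (d : ℝ)).ncard : ℤ))

/-- a set of at least `N₂ - N₁ + m` points in `[N₁, N₂]` contains a local
sampling set on some integer subinterval. -/
theorem stmt_9 (m : ℕ) (hm : 1 ≤ m) (N₁ N₂ : ℤ) (hN : N₁ < N₂) (E : Finset ℝ)
    (hE : (E : Set ℝ) ⊆ Set.Icc (N₁ : ℝ) N₂) (hcard : N₂ - N₁ + m ≤ (E.card : ℤ)) :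
    ∃ n₁ n₂ : ℤ, N₁ ≤ n₁ ∧ n₁ < n₂ ∧ n₂ ≤ N₂ ∧
      IsSamplingSet m n₁ n₂ ((E : Set ℝ) ∩ Set.Icc (n₁ : ℝ) (n₂ : ℝ)) := by
  classical
  -- `Good n`: there is an integer interval of length `n ≥ 1` inside `[N₁,N₂]`
  -- containing at least `n + m` points of `E`.
  set Good : Set ℕ := {n | 1 ≤ n ∧ ∃ a : ℤ, N₁ ≤ a ∧ a + n ≤ N₂ ∧
      ((n : ℤ) + m ≤ (cntIn E (Set.Icc (a : ℝ) ((a : ℝ) + (n : ℝ))) : ℤ))} with hGood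
  have hne : Good.Nonempty := by
    refine ⟨(N₂ - N₁).toNat, ⟨by omega, N₁, le_refl _, by omega, ?_⟩⟩
    have hcast : ((N₁ : ℝ) + (((N₂ - N₁).toNat : ℕ) : ℝ)) = (N₂ : ℝ) := by
      exact_mod_cast congrArg (fun z : ℤ => (z : ℝ))
        (show N₁ + ((N₂ - N₁).toNat : ℤ) = N₂ by omega)
    rw [hcast]
    have hfull : cntIn E (Set.Icc (N₁ : ℝ) (N₂ : ℝ)) = E.card :=
      cntIn_eq_card E _ (fun x hx => hE hx)
    rw [hfull]
    omega
  set ℓ := sInf Good with hℓdef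
  obtain ⟨hℓ1, a, haN, habN, hcount⟩ := Nat.sInf_mem hne
  set b := a + (ℓ : ℤ) with hb
  have hbR : ((a : ℝ) + ((ℓ : ℕ) : ℝ)) = ((b : ℤ) : ℝ) := by
    rw [hb]; push_cast; ring
  rw [hbR] at hcount
  -- the key minimality bound: any strictly shorter integer interval inside `[N₁, N₂]`
  -- contains at most `length + m` points (indeed `length + m - 1` when nondegenerate).
  have hbound : ∀ c e : ℤ, N₁ ≤ c → e ≤ N₂ → c ≤ e → e - c < (ℓ : ℤ) →
      (cntIn E (Set.Icc (c : ℝ) (e : ℝ)) : ℤ) ≤ e - c + m := by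
    intro c e hc he hce hlen
    rcases eq_or_lt_of_le hce with heq | hlt
    · subst heq
      have := cntIn_Icc_self E (c : ℝ)
      omega
    · by_contra hcon
      push_neg at hcon
      have hmem : (e - c).toNat ∈ Good := by
        refine ⟨by omega, c, hc, by omega, ?_⟩
        have hcast : ((c : ℝ) + (((e - c).toNat : ℕ) : ℝ)) = (e : ℝ) := by
          exact_mod_cast congrArg (fun z : ℤ => (z : ℝ))
            (show c + ((e - c).toNat : ℤ) = e by omega)
        rw [hcast]
        omega
      exact absurd hmem (Nat.notMem_of_lt_sInf (by omega))
  refine ⟨a, b, haN, by omega, by omega, ?_, ?_, ?_, ?_⟩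
  · -- total count
    rw [ncard_inter_cntIn]
    omega
  · -- left Schönberg–Whitney conditions
    intro k hk0 hkL
    have hset : (((E : Set ℝ) ∩ Set.Icc (a : ℝ) (b : ℝ)) ∩ Set.Ico (a : ℝ) ((a : ℝ) + k))
        = (E : Set ℝ) ∩ Set.Ico (a : ℝ) ((a : ℝ) + k) := by
      have hab : ((a : ℝ) + (k : ℝ)) ≤ (b : ℝ) := by
        have h1 : a + k ≤ b := by omega
        exact_mod_cast h1
      ext x
      simp only [Set.mem_inter_iff, Set.mem_Icc, Set.mem_Ico]
      constructor
      · tauto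
      · rintro ⟨hx, h1, h2⟩
        exact ⟨⟨hx, h1, by linarith⟩, h1, h2⟩
    rw [hset, ncard_inter_cntIn]
    by_contra hcon
    push_neg at hcon
    have hk1 : 1 ≤ k := by omega
    have hsplit : cntIn E (Set.Icc (a : ℝ) (b : ℝ)) ≤
        cntIn E (Set.Ico (a : ℝ) ((a : ℝ) + k)) + cntIn E (Set.Icc (((a + k : ℤ)) : ℝ) (b : ℝ)) := by
      apply cntIn_le_add
      intro x hx
      simp only [Set.mem_Icc, Set.mem_Ico] at *
      by_cases hxc : x < (a : ℝ) + k
      · left; exact ⟨hx.1, hxc⟩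
      · right
        push_neg at hxc
        push_cast
        exact ⟨hxc, hx.2⟩
    have hB := hbound (a + k) b (by omega) (by omega) (by omega) (by omega)
    omega
  · -- right Schönberg–Whitney conditions
    intro k hk0 hkL
    have hset : (((E : Set ℝ) ∩ Set.Icc (a : ℝ) (b : ℝ)) ∩ Set.Ioc ((b : ℝ) - k) (b : ℝ))
        = (E : Set ℝ) ∩ Set.Ioc ((b : ℝ) - k) (b : ℝ) := by
      have hab : (a : ℝ) ≤ (b : ℝ) - (k : ℝ) := by
        have h1 : a ≤ b - k := by omega
        have h2 : ((a : ℤ) : ℝ) ≤ (((b - k : ℤ)) : ℝ) := by exact_mod_cast h1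
        push_cast at h2
        linarith
      ext x
      simp only [Set.mem_inter_iff, Set.mem_Icc, Set.mem_Ioc]
      constructor
      · tauto
      · rintro ⟨hx, h1, h2⟩
        exact ⟨⟨hx, by linarith, h2⟩, h1, h2⟩
    rw [hset, ncard_inter_cntIn]
    by_contra hcon
    push_neg at hcon
    have hk1 : 1 ≤ k := by omega
    have hsplit : cntIn E (Set.Icc (a : ℝ) (b : ℝ)) ≤
        cntIn E (Set.Ioc ((b : ℝ) - k) (b : ℝ)) + cntIn E (Set.Icc ((a : ℤ) : ℝ) (((b - k : ℤ)) : ℝ)) := by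
      apply cntIn_le_add
      intro x hx
      simp only [Set.mem_Icc, Set.mem_Ioc] at *
      by_cases hxc : (b : ℝ) - k < x
      · left; exact ⟨hxc, hx.2⟩
      · right
        push_neg at hxc
        push_cast
        exact ⟨hx.1, hxc⟩
    have hB := hbound a (b - k) (by omega) (by omega) (by omega) (by omega)
    omega
  · -- interior conditions
    intro c d hac hcd hdb
    have hset : (((E : Set ℝ) ∩ Set.Icc (a : ℝ) (b : ℝ)) ∩ Set.Ioo (c : ℝ) (d : ℝ))
        = (E : Set ℝ) ∩ Set.Ioo (c : ℝ) (d : ℝ) := by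
      have h1 : (a : ℝ) ≤ (c : ℝ) := by exact_mod_cast hac
      have h2 : (d : ℝ) ≤ (b : ℝ) := by exact_mod_cast hdb
      ext x
      simp only [Set.mem_inter_iff, Set.mem_Icc, Set.mem_Ioo]
      constructor
      · tauto
      · rintro ⟨hx, hx1, hx2⟩
        exact ⟨⟨hx, by linarith, by linarith⟩, hx1, hx2⟩
    rw [hset, ncard_inter_cntIn]
    have hsplit : cntIn E (Set.Icc (a : ℝ) (b : ℝ)) ≤
        cntIn E (Set.Icc ((a : ℤ) : ℝ) ((c : ℤ) : ℝ)) + cntIn E (Set.Ioo (c : ℝ) (d : ℝ))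
          + cntIn E (Set.Icc ((d : ℤ) : ℝ) ((b : ℤ) : ℝ)) := by
      apply cntIn_le_add3
      intro x hx
      simp only [Set.mem_Icc, Set.mem_Ioo] at *
      by_cases hx1 : x ≤ (c : ℝ)
      · left; exact ⟨hx.1, hx1⟩
      · push_neg at hx1
        by_cases hx2 : x < (d : ℝ)
        · right; left; exact ⟨hx1, hx2⟩
        · push_neg at hx2
          right; right; exact ⟨hx2, hx.2⟩
    have hB1 := hbound a c haN (by omega) hac (by omega)
    have hB2 := hbound d b (by omega) (by omega) hdb (by omega)
    omega
end

section
/- Let N_1 < N_2 be integers, m ≥ 1, and suppose E ⊂ [N_1, N_2] is a finite set of distinct real numbers satisfying: #E ≥ N_2−N_1+m+1; #(E ∩ [N_1, N_1+k)) ≥ k+1 and #(E ∩ (N_2−k, N_2]) ≥ k+1 for all 1 ≤ k ≤ N_2−N_1; and #(E ∩ (n_1, n_2)) ≥ n_2−n_1−m+1 for all integers N_1 ≤ n_1 < n_2 ≤ N_2. Then there exists a subset E' ⊆ E with #E' = N_2−N_1+m+1 satisfying the same three families of inequalities (with #E' = N_2−N_1+m+1 in place of the first). -/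
open Classical

noncomputable def Ff (E : Finset ℝ) (T : Set ℝ) : Finset ℝ := E.filter (fun x => x ∈ T)

lemma ncard_eq_F (E : Finset ℝ) (T : Set ℝ) : ((E:Set ℝ) ∩ T).ncard = (Ff E T).card := by
  rw [← Set.ncard_coe_finset]
  congr 1
  ext x
  simp [Ff]

lemma mem_F (E : Finset ℝ) (T : Set ℝ) (x : ℝ) : x ∈ Ff E T ↔ x ∈ E ∧ x ∈ T := by
  simp [Ff]

lemma count_ie (E : Finset ℝ) (U I J : Set ℝ) (h : U ⊆ I ∪ J) :
    ((Ff E U).card : ℤ) + (Ff E (I ∩ J)).card ≤ (Ff E I).card + (Ff E J).card := by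
  have h1 : Ff E U ⊆ Ff E I ∪ Ff E J := by
    intro x hx
    rw [mem_F] at hx
    rcases h hx.2 with h' | h' <;> simp [Finset.mem_union, mem_F, hx.1, h']
  have h2 : Ff E (I ∩ J) = Ff E I ∩ Ff E J := by
    ext x; simp [mem_F, Finset.mem_inter]; tauto
  have h3 := Finset.card_union_add_card_inter (Ff E I) (Ff E J)
  have h4 := Finset.card_le_card h1
  rw [h2]
  omega

lemma F_sub (E : Finset ℝ) (T : Set ℝ) : Ff E T ⊆ E :=
  fun x hx => ((mem_F _ _ _).mp hx).1

lemma F_erase (E : Finset ℝ) (x : ℝ) (T : Set ℝ) :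
    Ff (E.erase x) T = (Ff E T).erase x := by
  ext y; simp [mem_F, Finset.mem_erase]; tauto

lemma deletion (m : ℕ) (hm : 1 ≤ m) (N₁ N₂ : ℤ) (hN : N₁ < N₂) (E : Finset ℝ)
    (hE : (E : Set ℝ) ⊆ Set.Icc (N₁ : ℝ) N₂)
    (hcard : N₂ - N₁ + m + 2 ≤ (E.card : ℤ))
    (hleft : ∀ k : ℤ, 1 ≤ k → k ≤ N₂ - N₁ →
      k + 1 ≤ (((E : Set ℝ) ∩ Set.Ico (N₁ : ℝ) ((N₁ : ℝ) + k)).ncard : ℤ))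
    (hright : ∀ k : ℤ, 1 ≤ k → k ≤ N₂ - N₁ →
      k + 1 ≤ (((E : Set ℝ) ∩ Set.Ioc ((N₂ : ℝ) - k) (N₂ : ℝ)).ncard : ℤ))
    (hmid : ∀ n₁ n₂ : ℤ, N₁ ≤ n₁ → n₁ < n₂ → n₂ ≤ N₂ →
      n₂ - n₁ - m + 1 ≤ (((E : Set ℝ) ∩ Set.Ioo (n₁ : ℝ) (n₂ : ℝ)).ncard : ℤ)) :
    ∃ x ∈ E,
      (∀ k : ℤ, 1 ≤ k → k ≤ N₂ - N₁ →
        k + 1 ≤ ((((E.erase x) : Set ℝ) ∩ Set.Ico (N₁ : ℝ) ((N₁ : ℝ) + k)).ncard : ℤ)) ∧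
      (∀ k : ℤ, 1 ≤ k → k ≤ N₂ - N₁ →
        k + 1 ≤ ((((E.erase x) : Set ℝ) ∩ Set.Ioc ((N₂ : ℝ) - k) (N₂ : ℝ)).ncard : ℤ)) ∧
      (∀ n₁ n₂ : ℤ, N₁ ≤ n₁ → n₁ < n₂ → n₂ ≤ N₂ →
        n₂ - n₁ - m + 1 ≤ ((((E.erase x) : Set ℝ) ∩ Set.Ioo (n₁ : ℝ) (n₂ : ℝ)).ncard : ℤ)) := by
  simp only [ncard_eq_F] at hleft hright hmid ⊢
  set D := N₂ - N₁ with hD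
  -- greatest tight left index a
  obtain ⟨a, ha, hamax⟩ := Int.exists_greatest_of_bdd (P := fun k =>
      k = 0 ∨ (1 ≤ k ∧ k ≤ D ∧ ((Ff E (Set.Ico (N₁ : ℝ) ((N₁ : ℝ) + k))).card : ℤ) = k + 1))
    ⟨D, by rintro z (rfl | ⟨_, h, _⟩) <;> omega⟩ ⟨0, Or.inl rfl⟩
  obtain ⟨b, hb, hbmax⟩ := Int.exists_greatest_of_bdd (P := fun k =>
      k = 0 ∨ (1 ≤ k ∧ k ≤ D ∧ ((Ff E (Set.Ioc ((N₂ : ℝ) - k) (N₂ : ℝ))).card : ℤ) = k + 1))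
    ⟨D, by rintro z (rfl | ⟨_, h, _⟩) <;> omega⟩ ⟨0, Or.inl rfl⟩
  have ha0 : 0 ≤ a := hamax 0 (Or.inl rfl)
  have hb0 : 0 ≤ b := hbmax 0 (Or.inl rfl)
  have haD : a ≤ D := by rcases ha with rfl | ⟨_, h, _⟩ <;> omega
  have hbD : b ≤ D := by rcases hb with rfl | ⟨_, h, _⟩ <;> omega
  set A := Ff E (Set.Ico (N₁ : ℝ) ((N₁ : ℝ) + a)) with hA
  set B := Ff E (Set.Ioc ((N₂ : ℝ) - b) (N₂ : ℝ)) with hB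
  have cardA : (A.card : ℤ) ≤ a + 1 := by
    rcases ha with rfl | ⟨_, _, h⟩
    · have : A = ∅ := by
        rw [hA, Finset.eq_empty_iff_forall_notMem]
        intro x hx
        rw [mem_F] at hx
        have := hx.2.1; have := hx.2.2
        push_cast at *
        linarith
      simp [this]
    · omega
  have cardB : (B.card : ℤ) ≤ b + 1 := by
    rcases hb with rfl | ⟨_, _, h⟩
    · have : B = ∅ := by
        rw [hB, Finset.eq_empty_iff_forall_notMem]
        intro x hx
        rw [mem_F] at hx
        have := hx.2.1; have := hx.2.2
        push_cast at *
        linarith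
      simp [this]
    · omega
  set S := (E \ A) \ B with hS
  have hSsub : S ⊆ E := (Finset.sdiff_subset).trans Finset.sdiff_subset
  have hSmem : ∀ x ∈ S, x ∈ E ∧ (N₁ : ℝ) + a ≤ x ∧ x ≤ (N₂ : ℝ) - b := by
    intro x hx
    have hxE : x ∈ E := hSsub hx
    have hIcc := hE (by exact_mod_cast hxE)
    rw [hS, Finset.mem_sdiff, Finset.mem_sdiff] at hx
    obtain ⟨⟨_, hxA⟩, hxB⟩ := hx
    rw [hA, mem_F] at hxA
    rw [hB, mem_F] at hxB
    refine ⟨hxE, ?_, ?_⟩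
    · by_contra hlt
      push_neg at hlt
      exact hxA ⟨hxE, hIcc.1, hlt⟩
    · by_contra hlt
      push_neg at hlt
      exact hxB ⟨hxE, hlt, hIcc.2⟩
  -- a + b ≤ D
  have hab : a + b ≤ D := by
    by_contra hcon
    push_neg at hcon
    have ha1 : 1 ≤ a := by omega
    have hb1 : 1 ≤ b := by omega
    have haT : (A.card : ℤ) = a + 1 := by rcases ha with rfl | ⟨_, _, h⟩ <;> omega
    have hbT : (B.card : ℤ) = b + 1 := by rcases hb with rfl | ⟨_, _, h⟩ <;> omega
    have hcover : Set.Icc (N₁ : ℝ) N₂ ⊆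
        Set.Ico (N₁ : ℝ) ((N₁ : ℝ) + a) ∪ Set.Ioc ((N₂ : ℝ) - b) (N₂ : ℝ) := by
      intro y hy
      have hlt : ((N₂ : ℝ) - b) < (N₁ : ℝ) + a := by
        have : (N₂ : ℤ) - b < N₁ + a := by omega
        exact_mod_cast this
      rcases lt_or_ge y ((N₁ : ℝ) + a) with h | h
      · exact Or.inl ⟨hy.1, h⟩
      · exact Or.inr ⟨lt_of_lt_of_le hlt h, hy.2⟩
    have hinter : Set.Ico (N₁ : ℝ) ((N₁ : ℝ) + a) ∩ Set.Ioc ((N₂ : ℝ) - b) (N₂ : ℝ) =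
        Set.Ioo (((N₂ - b : ℤ)) : ℝ) (((N₁ + a : ℤ)) : ℝ) := by
      ext y
      simp only [Set.mem_inter_iff, Set.mem_Ico, Set.mem_Ioc, Set.mem_Ioo]
      push_cast
      constructor
      · rintro ⟨⟨_, h2⟩, ⟨h3, _⟩⟩; exact ⟨h3, h2⟩
      · rintro ⟨h1, h2⟩
        have c1 : ((N₁ : ℝ)) ≤ (N₂ : ℝ) - b := by
          have : (N₁ : ℤ) ≤ N₂ - b := by omega
          exact_mod_cast this
        have c2 : ((N₁ : ℝ)) + a ≤ (N₂ : ℝ) := by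
          have : (N₁ : ℤ) + a ≤ N₂ := by omega
          exact_mod_cast this
        exact ⟨⟨le_of_lt (lt_of_le_of_lt c1 h1), h2⟩, ⟨h1, le_trans (le_of_lt h2) c2⟩⟩
    have hEfull : Ff E (Set.Icc (N₁ : ℝ) N₂) = E := by
      ext x
      rw [mem_F]
      exact ⟨And.left, fun hx => ⟨hx, hE (by exact_mod_cast hx)⟩⟩
    have hie := count_ie E (Set.Icc (N₁ : ℝ) N₂) _ _ hcover
    rw [hEfull, hinter] at hie
    have hmid' := hmid (N₂ - b) (N₁ + a) (by omega) (by omega) (by omega)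
    rw [← hA, ← hB] at hie
    omega
  have cardS : (D : ℤ) + m - a - b ≤ S.card := by
    have h1 : (E \ A).card = E.card - A.card := Finset.card_sdiff_of_subset (F_sub E _)
    have h2 := Finset.card_sdiff_add_card_inter (E \ A) B
    have h3 : ((E \ A) ∩ B).card ≤ B.card := Finset.card_le_card (Finset.inter_subset_right)
    have h4 : A.card ≤ E.card := Finset.card_le_card (F_sub E _)
    rw [hS]
    omega
  -- tight positive middle intervals
  set TP : ℤ → ℤ → Prop := fun α β =>
    N₁ ≤ α ∧ α < β ∧ β ≤ N₂ ∧
      ((Ff E (Set.Ioo (α : ℝ) (β : ℝ))).card : ℤ) = β - α - m + 1 ∧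
      1 ≤ β - α - (m : ℤ) + 1 with hTPdef
  -- merging lemma
  have hmerge : ∀ α β α' β', TP α β → TP α' β' → α' < β → α < β' →
      TP (min α α') (max β β') := by
    intro α β α' β' h1 h2 hov1 hov2
    obtain ⟨h1a, h1b, h1c, h1d, h1e⟩ := h1
    obtain ⟨h2a, h2b, h2c, h2d, h2e⟩ := h2
    have cmin : ((min α α' : ℤ) : ℝ) = min (α : ℝ) (α' : ℝ) := by push_cast; rfl
    have cmax : ((max β β' : ℤ) : ℝ) = max (β : ℝ) (β' : ℝ) := by push_cast; rfl
    refine ⟨by omega, by omega, by omega, ?_, by omega⟩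
    have hcover : Set.Ioo ((min α α' : ℤ) : ℝ) ((max β β' : ℤ) : ℝ) ⊆
        Set.Ioo (α : ℝ) (β : ℝ) ∪ Set.Ioo (α' : ℝ) (β' : ℝ) := by
      intro y hy
      rw [cmin, cmax] at hy
      obtain ⟨hy1, hy2⟩ := hy
      have cb : (α' : ℝ) < β := by exact_mod_cast hov1
      have cb2 : (α : ℝ) < β' := by exact_mod_cast hov2
      rcases lt_or_ge y (β : ℝ) with h | h
      · rcases lt_or_ge (α : ℝ) y with h' | h'
        · exact Or.inl ⟨h', h⟩
        · rcases min_cases (α : ℝ) (α' : ℝ) with ⟨he, _⟩ | ⟨he, _⟩ <;> rw [he] at hy1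
          · exact Or.inl ⟨hy1, h⟩
          · exact Or.inr ⟨hy1, lt_of_le_of_lt h' cb2⟩
      · refine Or.inr ⟨lt_of_lt_of_le cb h, ?_⟩
        rcases max_cases (β : ℝ) (β' : ℝ) with ⟨he, _⟩ | ⟨he, _⟩
        · rw [he] at hy2; linarith
        · rw [he] at hy2; exact hy2
    have hinter : Set.Ioo (α : ℝ) (β : ℝ) ∩ Set.Ioo (α' : ℝ) (β' : ℝ) =
        Set.Ioo ((max α α' : ℤ) : ℝ) ((min β β' : ℤ) : ℝ) := by
      rw [Set.Ioo_inter_Ioo]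
      congr 1 <;> push_cast <;> rfl
    have hie := count_ie E _ _ _ hcover
    rw [hinter] at hie
    have hmid1 := hmid (max α α') (min β β') (by omega) (by omega) (by omega)
    have hmid2 := hmid (min α α') (max β β') (by omega) (by omega) (by omega)
    omega
  -- any tight interval touching S starts at N₁ + a or later
  have hLB : ∀ α β, TP α β → (∃ x ∈ S, x ∈ Set.Ioo ((α : ℤ) : ℝ) ((β : ℤ) : ℝ)) →
      N₁ + a ≤ α := by
    intro α β hTP' hx
    obtain ⟨hα1, hαβ, hβ2, hcnt, hpos⟩ := hTP'
    by_contra hcon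
    push_neg at hcon
    have ha1 : 1 ≤ a := by omega
    have haT : (A.card : ℤ) = a + 1 := by rcases ha with rfl | ⟨_, _, h⟩ <;> omega
    obtain ⟨x, hxS, hxIoo⟩ := hx
    obtain ⟨hxE, hxa, hxb⟩ := hSmem x hxS
    have hβa : N₁ + a < β := by
      have : ((N₁ + a : ℤ) : ℝ) < (β : ℝ) := by
        push_cast
        exact lt_of_le_of_lt hxa hxIoo.2
      exact_mod_cast this
    have hcover : Set.Ico (N₁ : ℝ) (β : ℝ) ⊆
        Set.Ico (N₁ : ℝ) ((N₁ : ℝ) + a) ∪ Set.Ioo (α : ℝ) (β : ℝ) := by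
      intro y hy
      rcases lt_or_ge y ((N₁ : ℝ) + a) with h | h
      · exact Or.inl ⟨hy.1, h⟩
      · refine Or.inr ⟨lt_of_lt_of_le ?_ h, hy.2⟩
        have hc' : ((α : ℤ) : ℝ) < ((N₁ + a : ℤ) : ℝ) := by exact_mod_cast hcon
        push_cast at hc' ⊢
        linarith
    have hinter : Set.Ico (N₁ : ℝ) ((N₁ : ℝ) + a) ∩ Set.Ioo (α : ℝ) (β : ℝ) =
        Set.Ioo ((α : ℤ) : ℝ) (((N₁ + a : ℤ)) : ℝ) := by
      ext y
      simp only [Set.mem_inter_iff, Set.mem_Ico, Set.mem_Ioo]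
      push_cast
      constructor
      · rintro ⟨⟨_, h2⟩, ⟨h3, _⟩⟩; exact ⟨h3, h2⟩
      · rintro ⟨hy1, hy2⟩
        have c1 : (N₁ : ℝ) ≤ (α : ℝ) := by exact_mod_cast hα1
        have c2 : ((N₁ : ℝ)) + a ≤ (β : ℝ) := by
          have : ((N₁ + a : ℤ) : ℝ) ≤ ((β : ℤ) : ℝ) := by exact_mod_cast (le_of_lt hβa)
          push_cast at this
          linarith
        exact ⟨⟨le_trans c1 (le_of_lt hy1), hy2⟩, ⟨hy1, lt_of_lt_of_le hy2 c2⟩⟩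
    have hie := count_ie E _ _ _ hcover
    rw [hinter, ← hA] at hie
    have hmid' := hmid α (N₁ + a) (by omega) (by omega) (by omega)
    have hleft' := hleft (β - N₁) (by omega) (by omega)
    have hrw : (N₁ : ℝ) + ((β - N₁ : ℤ) : ℝ) = (β : ℝ) := by push_cast; ring
    have hceq : Ff E (Set.Ico (N₁ : ℝ) ((N₁ : ℝ) + ((β - N₁ : ℤ) : ℝ))) =
        Ff E (Set.Ico (N₁ : ℝ) ((β : ℤ) : ℝ)) := by rw [hrw]
    rw [hceq] at hleft'
    have hTL : β - N₁ ≤ a := hamax (β - N₁) (Or.inr ⟨by omega, by omega,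
      by rw [hceq]; omega⟩)
    omega
  have hRB : ∀ α β, TP α β → (∃ x ∈ S, x ∈ Set.Ioo ((α : ℤ) : ℝ) ((β : ℤ) : ℝ)) →
      β ≤ N₂ - b := by
    intro α β hTP' hx
    obtain ⟨hα1, hαβ, hβ2, hcnt, hpos⟩ := hTP'
    by_contra hcon
    push_neg at hcon
    have hb1 : 1 ≤ b := by omega
    have hbT : (B.card : ℤ) = b + 1 := by rcases hb with rfl | ⟨_, _, h⟩ <;> omega
    obtain ⟨x, hxS, hxIoo⟩ := hx
    obtain ⟨hxE, hxa, hxb⟩ := hSmem x hxS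
    have hαb : α < N₂ - b := by
      have : (α : ℝ) < ((N₂ - b : ℤ) : ℝ) := by
        push_cast
        exact lt_of_lt_of_le hxIoo.1 hxb
      exact_mod_cast this
    have hcover : Set.Ioc ((α : ℤ) : ℝ) (N₂ : ℝ) ⊆
        Set.Ioo ((α : ℤ) : ℝ) ((β : ℤ) : ℝ) ∪ Set.Ioc ((N₂ : ℝ) - b) (N₂ : ℝ) := by
      intro y hy
      rcases lt_or_ge ((N₂ : ℝ) - b) y with h | h
      · exact Or.inr ⟨h, hy.2⟩
      · refine Or.inl ⟨hy.1, lt_of_le_of_lt h ?_⟩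
        have hc' : ((N₂ - b : ℤ) : ℝ) < ((β : ℤ) : ℝ) := by exact_mod_cast hcon
        push_cast at hc' ⊢
        linarith
    have hinter : Set.Ioo ((α : ℤ) : ℝ) ((β : ℤ) : ℝ) ∩ Set.Ioc ((N₂ : ℝ) - b) (N₂ : ℝ) =
        Set.Ioo (((N₂ - b : ℤ)) : ℝ) ((β : ℤ) : ℝ) := by
      ext y
      simp only [Set.mem_inter_iff, Set.mem_Ioc, Set.mem_Ioo]
      push_cast
      constructor
      · rintro ⟨⟨_, h2⟩, ⟨h3, _⟩⟩; exact ⟨h3, h2⟩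
      · rintro ⟨hy1, hy2⟩
        have c1 : (α : ℝ) < (N₂ : ℝ) - b := by
          have : ((α : ℤ) : ℝ) < ((N₂ - b : ℤ) : ℝ) := by exact_mod_cast hαb
          push_cast at this
          linarith
        have c2 : (β : ℝ) ≤ (N₂ : ℝ) := by exact_mod_cast hβ2
        exact ⟨⟨lt_trans c1 hy1, hy2⟩, ⟨hy1, le_trans (le_of_lt hy2) c2⟩⟩
    have hie := count_ie E _ _ _ hcover
    rw [hinter, ← hB] at hie
    have hmid' := hmid (N₂ - b) β (by omega) (by omega) (by omega)
    have hright' := hright (N₂ - α) (by omega) (by omega)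
    have hrw : (N₂ : ℝ) - ((N₂ - α : ℤ) : ℝ) = ((α : ℤ) : ℝ) := by push_cast; ring
    have hceq : Ff E (Set.Ioc ((N₂ : ℝ) - ((N₂ - α : ℤ) : ℝ)) (N₂ : ℝ)) =
        Ff E (Set.Ioc ((α : ℤ) : ℝ) (N₂ : ℝ)) := by rw [hrw]
    rw [hceq] at hright'
    have hTR : N₂ - α ≤ b := hbmax (N₂ - α) (Or.inr ⟨by omega, by omega,
      by rw [hceq]; omega⟩)
    omega
  -- covering claim
  have claim : ∀ n : ℕ, ∀ c : ℤ, (N₂ - c).toNat ≤ n →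
      (∀ α β, TP α β → (∃ x ∈ S, ((c : ℤ) : ℝ) ≤ x ∧ x ∈ Set.Ioo ((α : ℤ) : ℝ) ((β : ℤ) : ℝ)) →
        c ≤ α) →
      (∀ x ∈ S, ∃ α β, TP α β ∧ x ∈ Set.Ioo ((α : ℤ) : ℝ) ((β : ℤ) : ℝ)) →
      ((S.filter (fun x => ((c : ℤ) : ℝ) ≤ x)).card : ℤ) ≤ max 0 (N₂ - b - c - m + 1) := by
    intro n
    induction n with
    | zero =>
      intro c hc Hc Hcov
      have hempty : S.filter (fun x => ((c : ℤ) : ℝ) ≤ x) = ∅ := by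
        rw [Finset.eq_empty_iff_forall_notMem]
        intro x hx
        rw [Finset.mem_filter] at hx
        obtain ⟨hxS, hxc⟩ := hx
        obtain ⟨α, β, hTP', hIoo⟩ := Hcov x hxS
        have h1 : c ≤ α := Hc α β hTP' ⟨x, hxS, hxc, hIoo⟩
        have h2 : c < β := by
          have : ((c : ℤ) : ℝ) < ((β : ℤ) : ℝ) := lt_of_le_of_lt hxc hIoo.2
          exact_mod_cast this
        obtain ⟨_, hαβ, hβ2, _, _⟩ := hTP'
        omega
      rw [hempty]
      simp only [Finset.card_empty, Nat.cast_zero]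
      exact le_max_left 0 _
    | succ n ih =>
      intro c hc Hc Hcov
      rcases Finset.eq_empty_or_nonempty (S.filter (fun x => ((c : ℤ) : ℝ) ≤ x)) with he | hne
      · rw [he]
        simp only [Finset.card_empty, Nat.cast_zero]
        exact le_max_left 0 _
      · set s := (S.filter (fun x => ((c : ℤ) : ℝ) ≤ x)).min' hne with hsdef
        have hsmem := Finset.min'_mem _ hne
        rw [Finset.mem_filter] at hsmem
        obtain ⟨hsS, hsc⟩ := hsmem
        obtain ⟨β, ⟨α, hTPs, hsIoo⟩, hβmax⟩ := Int.exists_greatest_of_bdd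
          (P := fun β' => ∃ α', TP α' β' ∧ s ∈ Set.Ioo ((α' : ℤ) : ℝ) ((β' : ℤ) : ℝ))
          ⟨N₂, by rintro z ⟨α', hTP', _⟩; exact hTP'.2.2.1⟩
          (by obtain ⟨α', β', h1, h2⟩ := Hcov s hsS; exact ⟨β', α', h1, h2⟩)
        have hcα : c ≤ α := Hc α β hTPs ⟨s, hsS, hsc, hsIoo⟩
        have hβb : β ≤ N₂ - b := hRB α β hTPs ⟨s, hsS, hsIoo⟩
        have hcβ : c < β := by
          have : ((c : ℤ) : ℝ) < ((β : ℤ) : ℝ) := lt_of_le_of_lt hsc hsIoo.2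
          exact_mod_cast this
        -- split
        have hsplit : S.filter (fun x => ((c : ℤ) : ℝ) ≤ x) ⊆
            S.filter (fun x => x ∈ Set.Ioo ((α : ℤ) : ℝ) ((β : ℤ) : ℝ)) ∪
            S.filter (fun x => ((β : ℤ) : ℝ) ≤ x) := by
          intro x hx
          have hxmem := hx
          rw [Finset.mem_filter] at hxmem
          rcases le_or_gt ((β : ℤ) : ℝ) x with h | h
          · exact Finset.mem_union_right _ (Finset.mem_filter.mpr ⟨hxmem.1, h⟩)
          · refine Finset.mem_union_left _ (Finset.mem_filter.mpr ⟨hxmem.1, ?_, h⟩)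
            have hsx : s ≤ x := Finset.min'_le _ x hx
            exact lt_of_lt_of_le hsIoo.1 hsx
        have hc1 : ((S.filter (fun x => x ∈ Set.Ioo ((α : ℤ) : ℝ) ((β : ℤ) : ℝ))).card : ℤ) ≤
            β - α - m + 1 := by
          have hsub : S.filter (fun x => x ∈ Set.Ioo ((α : ℤ) : ℝ) ((β : ℤ) : ℝ)) ⊆
              Ff E (Set.Ioo ((α : ℤ) : ℝ) ((β : ℤ) : ℝ)) := by
            intro x hx
            rw [Finset.mem_filter] at hx
            exact (mem_F _ _ _).mpr ⟨hSsub hx.1, hx.2⟩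
          have := Finset.card_le_card hsub
          have hval := hTPs.2.2.2.1
          omega
        -- hypothesis for recursive call
        have Hβ : ∀ α' β', TP α' β' →
            (∃ x ∈ S, ((β : ℤ) : ℝ) ≤ x ∧ x ∈ Set.Ioo ((α' : ℤ) : ℝ) ((β' : ℤ) : ℝ)) →
            β ≤ α' := by
          intro α' β' hTP' hex
          obtain ⟨x, hxS, hxβ, hxIoo⟩ := hex
          by_contra hlt
          push_neg at hlt
          have hαβ' : α < β' := by
            have : ((α : ℤ) : ℝ) < ((β' : ℤ) : ℝ) :=
              lt_trans hsIoo.1 (lt_of_lt_of_le hsIoo.2 (le_trans hxβ (le_of_lt hxIoo.2)))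
            exact_mod_cast this
          have hββ' : β < β' := by
            have : ((β : ℤ) : ℝ) < ((β' : ℤ) : ℝ) := lt_of_le_of_lt hxβ hxIoo.2
            exact_mod_cast this
          have hmg := hmerge α β α' β' hTPs hTP' hlt hαβ'
          have hsmg : s ∈ Set.Ioo (((min α α' : ℤ)) : ℝ) (((max β β' : ℤ)) : ℝ) := by
            constructor
            · have h1 : ((min α α' : ℤ) : ℝ) ≤ ((α : ℤ) : ℝ) := by
                exact_mod_cast (min_le_left α α')
              exact lt_of_le_of_lt h1 hsIoo.1
            · have h1 : ((β : ℤ) : ℝ) ≤ ((max β β' : ℤ) : ℝ) := by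
                exact_mod_cast (le_max_left β β')
              exact lt_of_lt_of_le hsIoo.2 h1
          have := hβmax (max β β') ⟨min α α', hmg, hsmg⟩
          omega
        have hrec := ih β (by omega) Hβ Hcov
        have hcard2 := Finset.card_le_card hsplit
        have hcard3 := Finset.card_union_le
          (S.filter (fun x => x ∈ Set.Ioo ((α : ℤ) : ℝ) ((β : ℤ) : ℝ)))
          (S.filter (fun x => ((β : ℤ) : ℝ) ≤ x))
        rw [le_max_iff] at hrec
        refine le_max_iff.mpr (Or.inr ?_)
        rcases hrec with h | h <;> omega
  -- main case split
  by_cases hx : ∃ x ∈ S, ∀ α β, TP α β → x ∉ Set.Ioo ((α : ℤ) : ℝ) ((β : ℤ) : ℝ)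
  · obtain ⟨x, hxS, hxfree⟩ := hx
    obtain ⟨hxE, hxa, hxb⟩ := hSmem x hxS
    have herase : ∀ T : Set ℝ, ((Ff E T).card : ℤ) - 1 ≤ ((Ff (E.erase x) T).card : ℤ) := by
      intro T
      rw [F_erase]
      have := Finset.pred_card_le_card_erase (s := Ff E T) (a := x)
      omega
    have herase_eq : ∀ T : Set ℝ, x ∉ T → Ff (E.erase x) T = Ff E T := by
      intro T hxT
      rw [F_erase]
      apply Finset.erase_eq_of_notMem
      rw [mem_F]
      exact fun h => hxT h.2
    refine ⟨x, hxE, ?_, ?_, ?_⟩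
    · intro k hk1 hk2
      rcases le_or_gt k a with hka | hka
      · rw [herase_eq]
        · exact hleft k hk1 hk2
        · intro hmem
          have h1 : ((N₁ + k : ℤ) : ℝ) ≤ ((N₁ + a : ℤ) : ℝ) := by exact_mod_cast (by omega : N₁ + k ≤ N₁ + a)
          push_cast at h1 hxa
          have := hmem.2
          linarith
      · have hne : ((Ff E (Set.Ico (N₁ : ℝ) ((N₁ : ℝ) + (k : ℝ)))).card : ℤ) ≠ k + 1 := by
          intro heq
          have := hamax k (Or.inr ⟨hk1, hk2, heq⟩)
          omega
        have hge := hleft k hk1 hk2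
        have := herase (Set.Ico (N₁ : ℝ) ((N₁ : ℝ) + (k : ℝ)))
        omega
    · intro k hk1 hk2
      rcases le_or_gt k b with hkb | hkb
      · rw [herase_eq]
        · exact hright k hk1 hk2
        · intro hmem
          have h1 : ((N₂ - b : ℤ) : ℝ) ≤ ((N₂ - k : ℤ) : ℝ) := by exact_mod_cast (by omega : N₂ - b ≤ N₂ - k)
          push_cast at h1 hxb
          have := hmem.1
          linarith
      · have hne : ((Ff E (Set.Ioc ((N₂ : ℝ) - (k : ℝ)) (N₂ : ℝ))).card : ℤ) ≠ k + 1 := by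
          intro heq
          have := hbmax k (Or.inr ⟨hk1, hk2, heq⟩)
          omega
        have hge := hright k hk1 hk2
        have := herase (Set.Ioc ((N₂ : ℝ) - (k : ℝ)) (N₂ : ℝ))
        omega
    · intro n₁ n₂ h1 h2 h3
      have hge := hmid n₁ n₂ h1 h2 h3
      rcases le_or_gt (n₂ - n₁ - (m : ℤ) + 1) 0 with hb0' | hb1'
      · have : (0 : ℤ) ≤ ((Ff (E.erase x) (Set.Ioo ((n₁ : ℤ) : ℝ) ((n₂ : ℤ) : ℝ))).card : ℤ) := by positivity
        omega
      · by_cases hxI : x ∈ Set.Ioo ((n₁ : ℤ) : ℝ) ((n₂ : ℤ) : ℝ)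
        · have hne : ((Ff E (Set.Ioo ((n₁ : ℤ) : ℝ) ((n₂ : ℤ) : ℝ))).card : ℤ) ≠ n₂ - n₁ - m + 1 := by
            intro heq
            exact hxfree n₁ n₂ ⟨h1, h2, h3, heq, hb1'⟩ hxI
          have := herase (Set.Ioo ((n₁ : ℤ) : ℝ) ((n₂ : ℤ) : ℝ))
          omega
        · rw [herase_eq _ hxI]
          exact hge
  · push_neg at hx
    exfalso
    have Hcov : ∀ x ∈ S, ∃ α β, TP α β ∧ x ∈ Set.Ioo ((α : ℤ) : ℝ) ((β : ℤ) : ℝ) := by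
      intro x hxS
      obtain ⟨α, β, hTP', hmem⟩ := hx x hxS
      exact ⟨α, β, hTP', hmem⟩
    have Hc : ∀ α β, TP α β →
        (∃ x ∈ S, (((N₁ + a : ℤ)) : ℝ) ≤ x ∧ x ∈ Set.Ioo ((α : ℤ) : ℝ) ((β : ℤ) : ℝ)) →
        N₁ + a ≤ α := by
      intro α β hTP' hex
      obtain ⟨x, hxS, _, hIoo⟩ := hex
      exact hLB α β hTP' ⟨x, hxS, hIoo⟩
    have hfeq : S.filter (fun x => (((N₁ + a : ℤ)) : ℝ) ≤ x) = S := by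
      apply Finset.filter_true_of_mem
      intro x hxS
      have := (hSmem x hxS).2.1
      push_cast
      linarith
    have hclaim := claim (N₂ - (N₁ + a)).toNat (N₁ + a) (le_refl _) Hc Hcov
    rw [hfeq, le_max_iff] at hclaim
    rcases hclaim with h | h <;> omega

/-- combinatorial extraction lemma: from a point set satisfying the
almost-phaseless counting conditions one can extract a subset of the minimal
cardinality `N₂ - N₁ + m + 1` satisfying the same conditions. -/
theorem stmt_10 (m : ℕ) (hm : 1 ≤ m) (N₁ N₂ : ℤ) (hN : N₁ < N₂) (E : Finset ℝ)
    (hE : (E : Set ℝ) ⊆ Set.Icc (N₁ : ℝ) N₂)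
    (hcard : N₂ - N₁ + m + 1 ≤ (E.card : ℤ))
    (hleft : ∀ k : ℤ, 1 ≤ k → k ≤ N₂ - N₁ →
      k + 1 ≤ (((E : Set ℝ) ∩ Set.Ico (N₁ : ℝ) ((N₁ : ℝ) + k)).ncard : ℤ))
    (hright : ∀ k : ℤ, 1 ≤ k → k ≤ N₂ - N₁ →
      k + 1 ≤ (((E : Set ℝ) ∩ Set.Ioc ((N₂ : ℝ) - k) (N₂ : ℝ)).ncard : ℤ))
    (hmid : ∀ n₁ n₂ : ℤ, N₁ ≤ n₁ → n₁ < n₂ → n₂ ≤ N₂ →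
      n₂ - n₁ - m + 1 ≤ (((E : Set ℝ) ∩ Set.Ioo (n₁ : ℝ) (n₂ : ℝ)).ncard : ℤ)) :
    ∃ E' : Finset ℝ, E' ⊆ E ∧ (E'.card : ℤ) = N₂ - N₁ + m + 1 ∧
      (∀ k : ℤ, 1 ≤ k → k ≤ N₂ - N₁ →
        k + 1 ≤ (((E' : Set ℝ) ∩ Set.Ico (N₁ : ℝ) ((N₁ : ℝ) + k)).ncard : ℤ)) ∧
      (∀ k : ℤ, 1 ≤ k → k ≤ N₂ - N₁ →
        k + 1 ≤ (((E' : Set ℝ) ∩ Set.Ioc ((N₂ : ℝ) - k) (N₂ : ℝ)).ncard : ℤ)) ∧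
      (∀ n₁ n₂ : ℤ, N₁ ≤ n₁ → n₁ < n₂ → n₂ ≤ N₂ →
        n₂ - n₁ - m + 1 ≤ (((E' : Set ℝ) ∩ Set.Ioo (n₁ : ℝ) (n₂ : ℝ)).ncard : ℤ)) := by
  -- strong induction on the cardinality of E
  have key : ∀ n : ℕ, ∀ E : Finset ℝ, E.card ≤ n → (E : Set ℝ) ⊆ Set.Icc (N₁ : ℝ) N₂ →
      N₂ - N₁ + m + 1 ≤ (E.card : ℤ) →
      (∀ k : ℤ, 1 ≤ k → k ≤ N₂ - N₁ →
        k + 1 ≤ (((E : Set ℝ) ∩ Set.Ico (N₁ : ℝ) ((N₁ : ℝ) + k)).ncard : ℤ)) →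
      (∀ k : ℤ, 1 ≤ k → k ≤ N₂ - N₁ →
        k + 1 ≤ (((E : Set ℝ) ∩ Set.Ioc ((N₂ : ℝ) - k) (N₂ : ℝ)).ncard : ℤ)) →
      (∀ n₁ n₂ : ℤ, N₁ ≤ n₁ → n₁ < n₂ → n₂ ≤ N₂ →
        n₂ - n₁ - m + 1 ≤ (((E : Set ℝ) ∩ Set.Ioo (n₁ : ℝ) (n₂ : ℝ)).ncard : ℤ)) →
      ∃ E' : Finset ℝ, E' ⊆ E ∧ (E'.card : ℤ) = N₂ - N₁ + m + 1 ∧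
        (∀ k : ℤ, 1 ≤ k → k ≤ N₂ - N₁ →
          k + 1 ≤ (((E' : Set ℝ) ∩ Set.Ico (N₁ : ℝ) ((N₁ : ℝ) + k)).ncard : ℤ)) ∧
        (∀ k : ℤ, 1 ≤ k → k ≤ N₂ - N₁ →
          k + 1 ≤ (((E' : Set ℝ) ∩ Set.Ioc ((N₂ : ℝ) - k) (N₂ : ℝ)).ncard : ℤ)) ∧
        (∀ n₁ n₂ : ℤ, N₁ ≤ n₁ → n₁ < n₂ → n₂ ≤ N₂ →
          n₂ - n₁ - m + 1 ≤ (((E' : Set ℝ) ∩ Set.Ioo (n₁ : ℝ) (n₂ : ℝ)).ncard : ℤ)) := by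
    intro n
    induction n with
    | zero =>
      intro E hEn _ hcard' _ _ _
      exfalso
      have : E.card = 0 := Nat.le_zero.mp hEn
      omega
    | succ n ih =>
      intro E hEn hE' hcard' hleft' hright' hmid'
      rcases eq_or_lt_of_le hcard' with heq | hlt
      · exact ⟨E, Finset.Subset.refl E, heq.symm, hleft', hright', hmid'⟩
      · obtain ⟨x, hxE, hl2, hr2, hm2⟩ := deletion m hm N₁ N₂ hN E hE' (by omega)
          hleft' hright' hmid'
        have hcard2 : (E.erase x).card = E.card - 1 := Finset.card_erase_of_mem hxE
        have hcardpos : 1 ≤ E.card := Finset.card_pos.mpr ⟨x, hxE⟩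
        obtain ⟨E', hsub, h1, h2, h3, h4⟩ := ih (E.erase x) (by omega)
          (fun y hy => hE' (by
            have : (y : ℝ) ∈ (E.erase x : Finset ℝ) := by exact_mod_cast hy
            exact_mod_cast Finset.erase_subset x E this))
          (by omega) hl2 hr2 hm2
        exact ⟨E', hsub.trans (Finset.erase_subset x E), h1, h2, h3, h4⟩
  exact key E.card E (le_refl _) hE hcard hleft hright hmid
end

section
/- Every almost phaseless sampling set E = {x_1,...,x_N} ⊂ [N_1, N_2] for V_m|_{[N_1,N_2]} is a sampling set for V_m|_{[N_1,N_2]}: there exist functions S_1,...,S_N such that f(x) = Σ_{i=1}^N f(x_i) S_i(x) for all f ∈ V_m and x ∈ [N_1, N_2]. Equivalently, the matrix Φ = [φ_m(x_j − n)]_{N_1−m ≤ n ≤ N_2−1, 1 ≤ j ≤ N} has rank N_2 − N_1 + m. -/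
open MeasureTheory

/-- `E` is an almost phaseless sampling set for `V_m|_{[N₁,N₂]}`: all functions with
coefficient vector outside a finite union of proper subspaces of the coefficient space
are determined up to a sign on `[N₁,N₂]` by their unsigned samples on `E`. -/
def IsAlmostPhaselessSamplingSet (m : ℕ) (N₁ N₂ : ℤ) (E : Finset ℝ) : Prop :=
  ∃ S : Finset (Submodule ℝ ({n // n ∈ Finset.Icc (N₁ - (m : ℤ)) (N₂ - 1)} → ℝ)),
    (∀ W ∈ S, W ≠ ⊤) ∧
    ∀ c : ℤ → ℝ,
      (∀ W ∈ S, (fun n : {n // n ∈ Finset.Icc (N₁ - (m : ℤ)) (N₂ - 1)} => c n) ∉ W) →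
      ∀ c' : ℤ → ℝ,
        (∀ x ∈ E, |splineFun m N₁ N₂ c x| = |splineFun m N₁ N₂ c' x|) →
        (∀ x ∈ Set.Icc (N₁ : ℝ) N₂, splineFun m N₁ N₂ c' x = splineFun m N₁ N₂ c x) ∨
        (∀ x ∈ Set.Icc (N₁ : ℝ) N₂, splineFun m N₁ N₂ c' x = -splineFun m N₁ N₂ c x)


/-- evaluation at `x` as a linear map on coefficient vectors -/
noncomputable def evL (m : ℕ) (N₁ N₂ : ℤ) (x : ℝ) :
    ({n // n ∈ Finset.Icc (N₁ - (m : ℤ)) (N₂ - 1)} → ℝ) →ₗ[ℝ] ℝ :=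
  ∑ n : {n // n ∈ Finset.Icc (N₁ - (m : ℤ)) (N₂ - 1)},
    bspline m (x - (n : ℤ)) • LinearMap.proj n

lemma evL_apply (m : ℕ) (N₁ N₂ : ℤ) (x : ℝ)
    (v : {n // n ∈ Finset.Icc (N₁ - (m : ℤ)) (N₂ - 1)} → ℝ) :
    evL m N₁ N₂ x v = ∑ n : {n // n ∈ Finset.Icc (N₁ - (m : ℤ)) (N₂ - 1)},
      v n * bspline m (x - (n : ℤ)) := by
  simp [evL, LinearMap.sum_apply, mul_comm]

lemma splineFun_eq_evL (m : ℕ) (N₁ N₂ : ℤ) (c : ℤ → ℝ) (x : ℝ) :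
    splineFun m N₁ N₂ c x = evL m N₁ N₂ x (fun n => c n) := by
  rw [evL_apply, splineFun, ← Finset.sum_coe_sort (Finset.Icc (N₁ - (m : ℤ)) (N₂ - 1))
    (fun n => c n * bspline m (x - n))]

/-- extension of a coefficient vector to `ℤ → ℝ` -/
noncomputable def extC (m : ℕ) (N₁ N₂ : ℤ)
    (v : {n // n ∈ Finset.Icc (N₁ - (m : ℤ)) (N₂ - 1)} → ℝ) : ℤ → ℝ :=
  fun n => if h : n ∈ Finset.Icc (N₁ - (m : ℤ)) (N₂ - 1) then v ⟨n, h⟩ else 0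

lemma res_extC (m : ℕ) (N₁ N₂ : ℤ)
    (v : {n // n ∈ Finset.Icc (N₁ - (m : ℤ)) (N₂ - 1)} → ℝ) :
    (fun n : {n // n ∈ Finset.Icc (N₁ - (m : ℤ)) (N₂ - 1)} => extC m N₁ N₂ v n) = v := by
  funext n
  simp [extC, n.2]

/-- key lemma: if the samples of a spline on an almost phaseless sampling set vanish,
the spline vanishes on all of `[N₁, N₂]`. -/
lemma evL_ker (m : ℕ) (N₁ N₂ : ℤ) (E : Finset ℝ)
    (hAPS : IsAlmostPhaselessSamplingSet m N₁ N₂ E)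
    (v : {n // n ∈ Finset.Icc (N₁ - (m : ℤ)) (N₂ - 1)} → ℝ)
    (hv : ∀ y ∈ E, evL m N₁ N₂ y v = 0) :
    ∀ x ∈ Set.Icc (N₁ : ℝ) N₂, evL m N₁ N₂ x v = 0 := by
  obtain ⟨S, hS, hmain⟩ := hAPS
  -- find a generic coefficient vector
  obtain ⟨w, hw⟩ : ∃ w, ∀ W ∈ S, w ∉ W := by
    by_contra h
    push_neg at h
    apply Subspace.biUnion_ne_univ_of_top_notMem (s := S) (fun hT => hS ⊤ hT rfl)
    ext u
    simp only [Set.mem_iUnion, Set.mem_univ, iff_true]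
    obtain ⟨W, hW, hu⟩ := h u
    exact ⟨W, hW, hu⟩
  have key : ∀ w : {n // n ∈ Finset.Icc (N₁ - (m : ℤ)) (N₂ - 1)} → ℝ,
      (∀ W ∈ S, w ∉ W) →
      (∀ x ∈ Set.Icc (N₁ : ℝ) N₂, evL m N₁ N₂ x v = 0) ∨
      (∀ x ∈ Set.Icc (N₁ : ℝ) N₂, evL m N₁ N₂ x v = -2 * evL m N₁ N₂ x w) := by
    intro w hw
    have hgen : ∀ W ∈ S,
        (fun n : {n // n ∈ Finset.Icc (N₁ - (m : ℤ)) (N₂ - 1)} =>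
          extC m N₁ N₂ w n) ∉ W := by
      intro W hW
      rw [res_extC]
      exact hw W hW
    have habs : ∀ x ∈ E, |splineFun m N₁ N₂ (extC m N₁ N₂ w) x| =
        |splineFun m N₁ N₂ (extC m N₁ N₂ (w + v)) x| := by
      intro x hx
      rw [splineFun_eq_evL, splineFun_eq_evL, res_extC, res_extC, map_add,
        hv x hx, add_zero]
    rcases hmain (extC m N₁ N₂ w) hgen (extC m N₁ N₂ (w + v)) habs with h | h
    · left
      intro x hx
      have := h x hx
      rw [splineFun_eq_evL, splineFun_eq_evL, res_extC, res_extC, map_add] at this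
      linarith
    · right
      intro x hx
      have := h x hx
      rw [splineFun_eq_evL, splineFun_eq_evL, res_extC, res_extC, map_add] at this
      linarith
  have hw2 : ∀ W ∈ S, (2 : ℝ) • w ∉ W := by
    intro W hW h2
    apply hw W hW
    have := W.smul_mem ((2 : ℝ)⁻¹) h2
    rwa [smul_smul, inv_mul_cancel₀ (by norm_num), one_smul] at this
  rcases key w hw with h1 | h1
  · exact h1
  rcases key ((2 : ℝ) • w) hw2 with h2 | h2
  · exact h2
  intro x hx
  have e1 := h1 x hx
  have e2 := h2 x hx
  have e3 : (evL m N₁ N₂ x) ((2:ℝ) • w) = 2 * (evL m N₁ N₂ x) w := by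
    rw [LinearMap.map_smul, smul_eq_mul]
  rw [e3] at e2
  linarith

/-- an almost phaseless sampling set is a sampling set: there are
reconstruction functions `S_y` with `f = Σ_y f(y) S_y` on `[N₁, N₂]` for all `f` in the
spline space. -/

theorem stmt_12 (m : ℕ) (hm : 1 ≤ m) (N₁ N₂ : ℤ) (hN : N₁ < N₂) (E : Finset ℝ)
    (hE : (E : Set ℝ) ⊆ Set.Icc (N₁ : ℝ) N₂)
    (hAPS : IsAlmostPhaselessSamplingSet m N₁ N₂ E) :
    ∃ S : {y // y ∈ E} → ℝ → ℝ,
      ∀ c : ℤ → ℝ, ∀ x ∈ Set.Icc (N₁ : ℝ) N₂,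
        splineFun m N₁ N₂ c x = ∑ y : {y // y ∈ E}, splineFun m N₁ N₂ c y * S y x := by
  
  classical
  -- the sampling linear map
  set L : ({n // n ∈ Finset.Icc (N₁ - (m : ℤ)) (N₂ - 1)} → ℝ) →ₗ[ℝ]
      ({y // y ∈ E} → ℝ) := LinearMap.pi (fun y => evL m N₁ N₂ (y : ℝ)) with hL
  obtain ⟨q, hq⟩ := Submodule.exists_isCompl (LinearMap.range L)
  set π := (LinearMap.range L).linearProjOfIsCompl q hq with hπ
  obtain ⟨g, hg⟩ := L.rangeRestrict.exists_rightInverse_of_surjective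
    (LinearMap.range_rangeRestrict L)
  set G : ({y // y ∈ E} → ℝ) →ₗ[ℝ]
      ({n // n ∈ Finset.Icc (N₁ - (m : ℤ)) (N₂ - 1)} → ℝ) := g ∘ₗ π with hG
  have hGL : ∀ w, L (G (L w)) = L w := by
    intro w
    have h1 : π (L w) = L.rangeRestrict w := by
      rw [hπ]
      exact Submodule.linearProjOfIsCompl_apply_left hq (L.rangeRestrict w)
    have h2 : L.rangeRestrict (g (L.rangeRestrict w)) = L.rangeRestrict w := by
      have := congrArg (fun f => f (L.rangeRestrict w)) hg
      exact this
    have : L (g (L.rangeRestrict w)) = L w := congrArg Subtype.val h2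
    simpa [hG, h1] using this
  refine ⟨fun y x => evL m N₁ N₂ x (G (Pi.single y (1:ℝ) : {y // y ∈ E} → ℝ)), ?_⟩
  intro c x hx
  set v : {n // n ∈ Finset.Icc (N₁ - (m : ℤ)) (N₂ - 1)} → ℝ := fun n => c n with hv
  have hker : ∀ x ∈ Set.Icc (N₁ : ℝ) N₂, evL m N₁ N₂ x (G (L v) - v) = 0 := by
    apply evL_ker m N₁ N₂ E hAPS
    intro y hy
    have : L (G (L v) - v) = 0 := by rw [map_sub, hGL, sub_self]
    have := congrArg (fun f => f (⟨y, hy⟩ : {y // y ∈ E})) this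
    simpa [hL, LinearMap.pi_apply] using this
  have hsamp : ∀ y : {y // y ∈ E}, splineFun m N₁ N₂ c (y : ℝ) = L v y := by
    intro y
    rw [splineFun_eq_evL, hL, LinearMap.pi_apply, hv]
  calc splineFun m N₁ N₂ c x = evL m N₁ N₂ x v := splineFun_eq_evL m N₁ N₂ c x
    _ = evL m N₁ N₂ x (G (L v)) := by
        have := hker x hx
        rw [map_sub] at this
        linarith
    _ = evL m N₁ N₂ x (G (∑ y : {y // y ∈ E}, (L v y) • (Pi.single y (1:ℝ) : {y // y ∈ E} → ℝ))) := by
        congr 1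
        congr 1
        rw [show (∑ y : {y // y ∈ E}, (L v y) • (Pi.single y (1:ℝ) : {y // y ∈ E} → ℝ)) =
            ∑ y : {y // y ∈ E}, Pi.single y (L v y) from ?_, Finset.univ_sum_single]
        refine Finset.sum_congr rfl fun y _ => ?_
        funext z
        simp [Pi.single_apply, mul_ite]
    _ = ∑ y : {y // y ∈ E}, splineFun m N₁ N₂ c (y : ℝ) *
          evL m N₁ N₂ x (G (Pi.single y (1:ℝ) : {y // y ∈ E} → ℝ)) := by
        rw [map_sum, map_sum]
        refine Finset.sum_congr rfl fun y _ => ?_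
        rw [_root_.map_smul, _root_.map_smul, smul_eq_mul, hsamp]
end
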